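/- arXiv:2112.09250 — 3 statements merged into one kernel-verified Lean document; each statement's English description precedes it below -/
import Mathlib

section
/- There exists a bijection φ from S_f to O_f such that for every subgraph K ∈ S_f, the directed subgraph φ(K) is an orientation of G admitting a d-flow and A(φ(K)) = A(K); that is, the bijection preserves the w-min-cost d-flow. -/
open Finset

section Defs

variable {V : Type*}

/-- Reversal of a directed edge. -/
def drev (e : V × V) : V × V := (e.2, e.1)

/-- `K` is a subgraph of the (symmetric) edge set `E`: it contains either both or
neither of `e` and `drev e` for every `e ∈ E`. -/
def IsSubgraph [DecidableEq V] (E K : Finset (V × V)) : Prop :=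
  K ⊆ E ∧ ∀ e ∈ E, (e ∈ K ↔ drev e ∈ K)

/-- `L` is an orientation of the (symmetric) edge set `E`: it contains exactly one of
`e` and `drev e` for every `e ∈ E`. -/
def IsOrientation [DecidableEq V] (E L : Finset (V × V)) : Prop :=
  L ⊆ E ∧ ∀ e ∈ E, (e ∈ L ↔ drev e ∉ L)

variable [Fintype V] [DecidableEq V]

/-- `f` is a `d`-flow on the directed subgraph `D` of the graph with edge set `E`. -/
def IsFlow (E D : Finset (V × V)) (d : V → ℤ) (f : V × V → ℝ) : Prop :=
  (∀ e ∈ E, 0 ≤ f e ∧ f e ≤ 1) ∧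
  (∀ e, e ∉ D → f e = 0) ∧
  ∀ u : V,
    ((Finset.univ.filter (fun v : V => (u, v) ∈ E)).sum fun v => f (u, v)) -
      ((Finset.univ.filter (fun v : V => (v, u) ∈ E)).sum fun v => f (v, u)) = (d u : ℝ)

/-- A `d`-flow exists on `D`. -/
def AdmitsFlow (E D : Finset (V × V)) (d : V → ℤ) : Prop :=
  ∃ f : V × V → ℝ, IsFlow E D d f

/-- The `w`-cost of a flow `f`. -/
def flowCost (E : Finset (V × V)) (w : V × V → ℝ) (f : V × V → ℝ) : ℝ :=
  ∑ e ∈ E, w e * f e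

/-- `f` is a min-cost `d`-flow on `D`. -/
def IsMinCostFlow (E D : Finset (V × V)) (d : V → ℤ) (w : V × V → ℝ)
    (f : V × V → ℝ) : Prop :=
  IsFlow E D d f ∧ ∀ g : V × V → ℝ, IsFlow E D d g → flowCost E w f ≤ flowCost E w g

/-- The `{0,1}`-valued function determined by a set of edges. -/
def ind (S : Finset (V × V)) : V × V → ℝ := fun e => if e ∈ S then 1 else 0

/-- `A` assigns to every flow-admitting `D ⊆ E` the (edge set of the) unique,
`{0,1}`-valued min-cost `d`-flow on `D`. -/
def GoodA (E : Finset (V × V)) (d : V → ℤ) (w : V × V → ℝ)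
    (A : Finset (V × V) → Finset (V × V)) : Prop :=
  ∀ D : Finset (V × V), D ⊆ E → AdmitsFlow E D d →
    IsMinCostFlow E D d w (ind (A D)) ∧
    ∀ f : V × V → ℝ, IsMinCostFlow E D d w f → f = ind (A D)

/-- `A(D) = A(D')`: both `D` and `D'` admit a `d`-flow and their unique min-cost
`d`-flows coincide.  (If one of them admits no `d`-flow this is false.) -/
def AEq (E : Finset (V × V)) (d : V → ℤ) (A : Finset (V × V) → Finset (V × V))
    (D D' : Finset (V × V)) : Prop :=
  AdmitsFlow E D d ∧ AdmitsFlow E D' d ∧ A D = A D'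

/-- `D ⊕ e := (D ∪ {e}) \ {drev e}`. -/
def oplus (D : Finset (V × V)) (e : V × V) : Finset (V × V) := insert e D \ {drev e}

/-- `D + e := D ∪ {e, drev e}`. -/
def padd (D : Finset (V × V)) (e : V × V) : Finset (V × V) := D ∪ {e, drev e}

/-- `D − e := D \ {e, drev e}`. -/
def psub (D : Finset (V × V)) (e : V × V) : Finset (V × V) := D \ {e, drev e}

/-- The representative of `{e, drev e}` lying in the reference orientation `E'`. -/
def chi (E' : Finset (V × V)) (e : V × V) : V × V := if e ∈ E' then e else drev e

/-- The map `φ_e`. -/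
noncomputable def phiE (E : Finset (V × V)) (d : V → ℤ)
    (A : Finset (V × V) → Finset (V × V)) (E' : Finset (V × V))
    (e : V × V) (D : Finset (V × V)) : Finset (V × V) := by
  classical
  exact
    if ¬ AEq E d A D (oplus D e) then oplus D (drev e)
    else if ¬ AEq E d A D (oplus D (drev e)) then oplus D e
    else if e ∈ D then oplus D (chi E' e) else oplus D (drev (chi E' e))

/-- The map `ψ_e`. -/
noncomputable def psiE (E : Finset (V × V)) (d : V → ℤ)
    (A : Finset (V × V) → Finset (V × V)) (E' : Finset (V × V))
    (e : V × V) (D : Finset (V × V)) : Finset (V × V) := by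
  classical
  exact
    if ¬ AEq E d A D (padd D e) then psub D e
    else if ¬ AEq E d A D (psub D e) then padd D e
    else if chi E' e ∈ D then padd D e else psub D e

end Defs
set_option linter.unusedSectionVars false

section Aux

variable {V : Type*} [Fintype V] [DecidableEq V]

lemma drev_drev (e : V × V) : drev (drev e) = e := rfl

lemma ind_injective : Function.Injective (ind (V := V)) := by
  intro S T h
  ext x
  have hx := congrFun h x
  by_cases hS : x ∈ S <;> by_cases hT : x ∈ T <;>
    simp [ind, hS, hT] at hx ⊢

lemma isFlow_mono {E S S' : Finset (V × V)} {d : V → ℤ} {f : V × V → ℝ}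
    (hSS : S ⊆ S') (hf : IsFlow E S d f) : IsFlow E S' d f :=
  ⟨hf.1, fun e he => hf.2.1 e (fun h => he (hSS h)), hf.2.2⟩

lemma isFlow_restrict {E S D0 : Finset (V × V)} {d : V → ℤ} {f : V × V → ℝ}
    (hf : IsFlow E S d f) (h0 : ∀ x, x ∈ S → x ∉ D0 → f x = 0) : IsFlow E D0 d f := by
  refine ⟨hf.1, fun e he => ?_, hf.2.2⟩
  by_cases h : e ∈ S
  · exact h0 e h he
  · exact hf.2.1 e h

lemma sum_out_ite (E : Finset (V × V)) (p : V × V) (hp : p ∈ E) (c : ℝ) (u : V) :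
    ((Finset.univ.filter fun v : V => (u, v) ∈ E).sum fun v => if (u, v) = p then c else 0)
      = if u = p.1 then c else 0 := by
  by_cases h : u = p.1
  · subst h
    have hmem : p.2 ∈ Finset.univ.filter fun v : V => (p.1, v) ∈ E := by
      simp [Finset.mem_filter, hp]
    rw [if_pos rfl]
    rw [show ((Finset.univ.filter fun v : V => (p.1, v) ∈ E).sum
        fun v => if (p.1, v) = p then c else 0)
      = ((Finset.univ.filter fun v : V => (p.1, v) ∈ E).sum
        fun v => if v = p.2 then c else 0) from Finset.sum_congr rfl (by
          intro v _
          congr 1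
          simp [Prod.ext_iff])]
    rw [Finset.sum_ite_eq' _ p.2 (fun _ => c), if_pos hmem]
  · rw [if_neg h]
    apply Finset.sum_eq_zero
    intro v _
    rw [if_neg]
    intro hc
    exact h (congrArg Prod.fst hc)

lemma sum_in_ite (E : Finset (V × V)) (p : V × V) (hp : p ∈ E) (c : ℝ) (u : V) :
    ((Finset.univ.filter fun v : V => (v, u) ∈ E).sum fun v => if (v, u) = p then c else 0)
      = if u = p.2 then c else 0 := by
  by_cases h : u = p.2
  · subst h
    have hmem : p.1 ∈ Finset.univ.filter fun v : V => (v, p.2) ∈ E := by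
      simp [Finset.mem_filter, hp]
    rw [if_pos rfl]
    rw [show ((Finset.univ.filter fun v : V => (v, p.2) ∈ E).sum
        fun v => if (v, p.2) = p then c else 0)
      = ((Finset.univ.filter fun v : V => (v, p.2) ∈ E).sum
        fun v => if v = p.1 then c else 0) from Finset.sum_congr rfl (by
          intro v _
          congr 1
          simp [Prod.ext_iff])]
    rw [Finset.sum_ite_eq' _ p.1 (fun _ => c), if_pos hmem]
  · rw [if_neg h]
    apply Finset.sum_eq_zero
    intro v _
    rw [if_neg]
    intro hc
    exact h (congrArg Prod.snd hc)

lemma flow_cancel (E S : Finset (V × V)) (d : V → ℤ) (w : V × V → ℝ)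
    (e : V × V) (he : e ∈ E) (hee : drev e ∈ E) (hne : e ≠ drev e)
    (f : V × V → ℝ) (hf : IsFlow E S d f) :
    ∃ h : V × V → ℝ, IsFlow E S d h ∧
      h e = f e - min (f e) (f (drev e)) ∧
      h (drev e) = f (drev e) - min (f e) (f (drev e)) ∧
      (∀ x, x ≠ e → x ≠ drev e → h x = f x) ∧
      flowCost E w h = flowCost E w f - min (f e) (f (drev e)) * (w e + w (drev e)) := by
  set t := min (f e) (f (drev e)) with ht
  have ht0 : 0 ≤ t := le_min (hf.1 e he).1 (hf.1 _ hee).1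
  have hte : t ≤ f e := min_le_left _ _
  have htee : t ≤ f (drev e) := min_le_right _ _
  have hne' : drev e ≠ e := fun h => hne h.symm
  have h12 : e.1 ≠ e.2 := by
    intro h
    exact hne (Prod.ext h h.symm)
  refine ⟨fun x => f x + (if x = e then -t else 0) + (if x = drev e then -t else 0),
    ⟨?_, ?_, ?_⟩, by simp [hne, sub_eq_add_neg], by simp [hne', sub_eq_add_neg],
    by intro x h1 h2; simp [h1, h2], ?_⟩
  · intro x hx
    rcases hf.1 x hx with ⟨hx0, hx1⟩
    simp only
    split_ifs with hc1 hc2 hc2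
    · exact absurd (hc1.symm.trans hc2) hne
    · subst hc1; constructor <;> linarith
    · subst hc2; constructor <;> linarith
    · constructor <;> linarith
  · intro x hx
    have hx0 : f x = 0 := hf.2.1 x hx
    simp only
    split_ifs with hc1 hc2 hc2
    · exact absurd (hc1.symm.trans hc2) hne
    · subst hc1
      have : t = 0 := le_antisymm (by linarith) ht0
      rw [hx0, this]; ring
    · subst hc2
      have : t = 0 := le_antisymm (by linarith) ht0
      rw [hx0, this]; ring
    · rw [hx0]; ring
  · intro u
    have hc := hf.2.2 u
    simp only [Finset.sum_add_distrib]
    rw [sum_out_ite E e he (-t) u, sum_out_ite E (drev e) hee (-t) u,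
      sum_in_ite E e he (-t) u, sum_in_ite E (drev e) hee (-t) u]
    have h1 : (drev e).1 = e.2 := rfl
    have h2 : (drev e).2 = e.1 := rfl
    rw [h1, h2]
    by_cases hu1 : u = e.1 <;> by_cases hu2 : u = e.2
    · exact absurd (hu1.symm.trans hu2) h12
    · rw [if_pos hu1, if_neg hu2]; linarith
    · rw [if_neg hu1, if_pos hu2]; linarith
    · rw [if_neg hu1, if_neg hu2]; linarith
  · simp only [flowCost, mul_add, Finset.sum_add_distrib]
    have h1 : (∑ x ∈ E, w x * if x = e then -t else 0) = -(t * w e) := by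
      rw [show (∑ x ∈ E, w x * if x = e then -t else 0)
          = ∑ x ∈ E, if x = e then w x * -t else 0 from
        Finset.sum_congr rfl (by intro x _; split_ifs <;> simp)]
      rw [Finset.sum_ite_eq' E e (fun x => w x * -t), if_pos he]
      ring
    have h2 : (∑ x ∈ E, w x * if x = drev e then -t else 0) = -(t * w (drev e)) := by
      rw [show (∑ x ∈ E, w x * if x = drev e then -t else 0)
          = ∑ x ∈ E, if x = drev e then w x * -t else 0 from
        Finset.sum_congr rfl (by intro x _; split_ifs <;> simp)]
      rw [Finset.sum_ite_eq' E (drev e) (fun x => w x * -t), if_pos hee]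
      ring
    rw [h1, h2]
    ring

lemma isFlow_avg (E S1 S2 : Finset (V × V)) (d : V → ℤ) (w : V × V → ℝ)
    (f g : V × V → ℝ) (h1 : IsFlow E S1 d f) (h2 : IsFlow E S2 d g) :
    IsFlow E (S1 ∪ S2) d (fun x => (f x + g x) / 2) ∧
      flowCost E w (fun x => (f x + g x) / 2) = (flowCost E w f + flowCost E w g) / 2 := by
  refine ⟨⟨?_, ?_, ?_⟩, ?_⟩
  · intro x hx
    rcases h1.1 x hx with ⟨a0, a1⟩
    rcases h2.1 x hx with ⟨b0, b1⟩
    constructor <;> simp <;> linarith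
  · intro x hx
    rw [Finset.mem_union] at hx
    push_neg at hx
    simp only
    rw [h1.2.1 x hx.1, h2.2.1 x hx.2]
    norm_num
  · intro u
    have c1 := h1.2.2 u
    have c2 := h2.2.2 u
    simp only
    rw [← Finset.sum_div, ← Finset.sum_div, Finset.sum_add_distrib, Finset.sum_add_distrib]
    linarith
  · simp only [flowCost]
    rw [← Finset.sum_add_distrib, Finset.sum_div]
    apply Finset.sum_congr rfl
    intro x _
    ring

end Aux

section Hyb

variable {V : Type*} [Fintype V] [DecidableEq V]

/-- Hybrid sets: oriented on the (reference-oriented) pairs in `S`, subgraph-like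
on the remaining pairs. -/
def Hyb (E E' S D : Finset (V × V)) : Prop :=
  D ⊆ E ∧ (∀ r ∈ S, (r ∈ D ↔ drev r ∉ D)) ∧
    ∀ e ∈ E, chi E' e ∉ S → (e ∈ D ↔ drev e ∈ D)

end Hyb
set_option maxHeartbeats 3000000 in
theorem subgraph_orientation_bijection_preserving_min_cost_flow
    {V : Type*} [Fintype V] [DecidableEq V]
    (E : Finset (V × V)) (hE_symm : ∀ e, e ∈ E ↔ drev e ∈ E)
    (hE_ne : ∀ e ∈ E, e.1 ≠ e.2)
    (d : V → ℤ) (hd : ∑ u : V, d u = 0)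
    (w : V × V → ℝ) (hw : ∀ e ∈ E, 0 < w e)
    (A : Finset (V × V) → Finset (V × V)) (hA : GoodA E d w A) :
    ∃ φ : {K : Finset (V × V) // IsSubgraph E K ∧ AdmitsFlow E K d} ≃
          {L : Finset (V × V) // IsOrientation E L ∧ AdmitsFlow E L d},
      ∀ K, A (φ K).1 = A K.1 := by
  classical
  -- reference orientation E'
  let nat : V ≃ Fin (Fintype.card V) := Fintype.equivFin V
  set E' : Finset (V × V) := E.filter (fun e => nat e.1 < nat e.2) with hE'def
  have hE'sub : E' ⊆ E := Finset.filter_subset _ _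
  have hdrev_mem : ∀ {e : V × V}, e ∈ E → drev e ∈ E := fun {e} he => (hE_symm e).1 he
  have hdrev_ne : ∀ {e : V × V}, e ∈ E → e ≠ drev e :=
    fun {e} he h => hE_ne e he (congrArg Prod.fst h)
  have hE'or : ∀ e ∈ E, (e ∈ E' ↔ drev e ∉ E') := by
    intro e he
    have hne : nat e.1 ≠ nat e.2 := fun h => hE_ne e he (nat.injective h)
    have hde : drev e ∈ E := hdrev_mem he
    simp only [hE'def, Finset.mem_filter, drev]
    constructor
    · rintro ⟨-, hlt⟩ ⟨-, hlt'⟩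
      exact absurd (lt_trans hlt hlt') (lt_irrefl _)
    · intro h
      refine ⟨he, ?_⟩
      rcases lt_or_gt_of_ne hne with h1 | h1
      · exact h1
      · exact absurd ⟨hde, h1⟩ h
  -- basic consequences of hA
  have hAflow : ∀ D, D ⊆ E → AdmitsFlow E D d → IsFlow E D d (ind (A D)) :=
    fun D h1 h2 => ((hA D h1 h2).1).1
  have hAmin : ∀ D, D ⊆ E → AdmitsFlow E D d →
      ∀ g, IsFlow E D d g → flowCost E w (ind (A D)) ≤ flowCost E w g :=
    fun D h1 h2 => ((hA D h1 h2).1).2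
  have hAuniq : ∀ D, D ⊆ E → AdmitsFlow E D d →
      ∀ f, IsMinCostFlow E D d w f → f = ind (A D) :=
    fun D h1 h2 => (hA D h1 h2).2
  have hAsub : ∀ D, D ⊆ E → AdmitsFlow E D d → A D ⊆ D := by
    intro D h1 h2 x hx
    by_contra hxd
    have h0 := (hAflow D h1 h2).2.1 x hxd
    simp [ind, hx] at h0
  have key : ∀ D D'' : Finset (V × V), D ⊆ D'' → D'' ⊆ E → AdmitsFlow E D d →
      (AEq E d A D D'' ↔
        ∀ g, IsFlow E D'' d g → flowCost E w (ind (A D)) ≤ flowCost E w g) := by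
    intro D D'' hsub hsubE hadm
    have hDE : D ⊆ E := hsub.trans hsubE
    constructor
    · rintro ⟨-, hadm'', hEq⟩ g hg
      rw [hEq]
      exact hAmin D'' hsubE hadm'' g hg
    · intro hmin
      have hflow : IsFlow E D'' d (ind (A D)) := isFlow_mono hsub (hAflow D hDE hadm)
      have hadm'' : AdmitsFlow E D'' d := ⟨_, hflow⟩
      have := hAuniq D'' hsubE hadm'' (ind (A D)) ⟨hflow, hmin⟩
      exact ⟨hadm, hadm'', ind_injective this⟩
  have keyNot : ∀ D D'' : Finset (V × V), D ⊆ D'' → D'' ⊆ E → AdmitsFlow E D d →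
      ¬ AEq E d A D D'' →
      ∃ g, IsFlow E D'' d g ∧ flowCost E w g < flowCost E w (ind (A D)) := by
    intro D D'' hsub hsubE hadm hne
    by_contra hcon
    push_neg at hcon
    exact hne ((key D D'' hsub hsubE hadm).2 hcon)
  have AEq_symm : ∀ D1 D2, AEq E d A D1 D2 → AEq E d A D2 D1 :=
    fun D1 D2 h => ⟨h.2.1, h.1, h.2.2.symm⟩
  have extend : ∀ D0 D : Finset (V × V), D0 ⊆ D → D ⊆ E → AdmitsFlow E D d → A D ⊆ D0 →
      AdmitsFlow E D0 d ∧ A D0 = A D := by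
    intro D0 D hsub hDE hadm hAD
    have hflow : IsFlow E D0 d (ind (A D)) := by
      refine isFlow_restrict (hAflow D hDE hadm) (fun x hxD hx0 => ?_)
      simp only [ind, ite_eq_right_iff]
      intro hxA
      exact absurd (hAD hxA) hx0
    have hadm0 : AdmitsFlow E D0 d := ⟨_, hflow⟩
    have hmin : ∀ g, IsFlow E D0 d g → flowCost E w (ind (A D)) ≤ flowCost E w g :=
      fun g hg => hAmin D hDE hadm g (isFlow_mono hsub hg)
    have := hAuniq D0 (hsub.trans hDE) hadm0 (ind (A D)) ⟨hflow, hmin⟩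
    exact ⟨hadm0, (ind_injective this).symm⟩
  have extAEq : ∀ D0 D : Finset (V × V), D0 ⊆ D → D ⊆ E → AdmitsFlow E D d → A D ⊆ D0 →
      AEq E d A D D0 := by
    intro D0 D h1 h2 h3 h4
    obtain ⟨ha, hb⟩ := extend D0 D h1 h2 h3 h4
    exact ⟨h3, ha, hb.symm⟩
  have brek : ∀ D D0 : Finset (V × V), ∀ x, D ⊆ E → D0 ⊆ E → AdmitsFlow E D d →
      x ∈ A D → x ∉ D0 → ¬ AEq E d A D D0 := by
    rintro D D0 x hDE h0E hadm hx hx0 ⟨-, hadm0, hEq⟩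
    have h1 : ind (A D0) x = 0 := (hAflow D0 h0E hadm0).2.1 x hx0
    rw [← hEq] at h1
    simp [ind, hx] at h1
  have sandwich : ∀ D D1 D2 : Finset (V × V), D ⊆ D1 → D1 ⊆ D2 → D2 ⊆ E →
      AdmitsFlow E D d → AEq E d A D D2 → AEq E d A D D1 := by
    intro D D1 D2 h1 h2 h3 hadm h
    refine (key D D1 h1 (h2.trans h3) hadm).2 (fun g hg => ?_)
    exact (key D D2 (h1.trans h2) h3 hadm).1 h g (isFlow_mono h2 hg)
  have notBoth : ∀ D : Finset (V × V), ∀ e, D ⊆ E → AdmitsFlow E D d → e ∈ E →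
      ¬(e ∈ A D ∧ drev e ∈ A D) := by
    rintro D e hDE hadm heE ⟨h1, h2⟩
    obtain ⟨h, hflow, -, -, -, hcost⟩ :=
      flow_cancel E D d w e heE (hdrev_mem heE) (hdrev_ne heE) _ (hAflow D hDE hadm)
    have hmin := hAmin D hDE hadm h hflow
    have hv1 : ind (A D) e = 1 := by simp [ind, h1]
    have hv2 : ind (A D) (drev e) = 1 := by simp [ind, h2]
    rw [hv1, hv2, min_self] at hcost
    have hw1 := hw e heE
    have hw2 := hw (drev e) (hdrev_mem heE)
    linarith
  have pairAdd : ∀ D : Finset (V × V), ∀ e, D ⊆ E → AdmitsFlow E D d → e ∈ E →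
      e ∉ D → drev e ∉ D →
      AEq E d A D (insert e D) ∨ AEq E d A D (insert (drev e) D) := by
    intro D e hDE hadm heE heD heD'
    have heE' := hdrev_mem heE
    have hne := hdrev_ne heE
    by_contra hcon
    push_neg at hcon
    obtain ⟨h1, h2⟩ := hcon
    have hsub1 : insert e D ⊆ E := Finset.insert_subset heE hDE
    have hsub2 : insert (drev e) D ⊆ E := Finset.insert_subset heE' hDE
    obtain ⟨g1, hg1, hc1⟩ := keyNot D (insert e D) (Finset.subset_insert _ _) hsub1 hadm h1
    obtain ⟨g2, hg2, hc2⟩ :=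
      keyNot D (insert (drev e) D) (Finset.subset_insert _ _) hsub2 hadm h2
    have hadm1 : AdmitsFlow E (insert e D) d := ⟨_, hg1⟩
    have hadm2 : AdmitsFlow E (insert (drev e) D) d := ⟨_, hg2⟩
    set f1 := ind (A (insert e D)) with hf1def
    set f2 := ind (A (insert (drev e) D)) with hf2def
    have hf1 : IsFlow E (insert e D) d f1 := hAflow _ hsub1 hadm1
    have hf2 : IsFlow E (insert (drev e) D) d f2 := hAflow _ hsub2 hadm2
    have hc1' : flowCost E w f1 < flowCost E w (ind (A D)) :=
      lt_of_le_of_lt (hAmin _ hsub1 hadm1 g1 hg1) hc1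
    have hc2' : flowCost E w f2 < flowCost E w (ind (A D)) :=
      lt_of_le_of_lt (hAmin _ hsub2 hadm2 g2 hg2) hc2
    -- f1 must use e with value 1
    have hf1e : f1 e = 1 := by
      by_cases he' : e ∈ A (insert e D)
      · simp [hf1def, ind, he']
      · exfalso
        have h0 : IsFlow E D d f1 := by
          refine isFlow_restrict hf1 (fun x hx hxD => ?_)
          rcases Finset.mem_insert.1 hx with rfl | hx'
          · simp [hf1def, ind, he']
          · exact absurd hx' hxD
        linarith [hAmin D hDE hadm f1 h0]
    have hf2e : f2 (drev e) = 1 := by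
      by_cases he' : drev e ∈ A (insert (drev e) D)
      · simp [hf2def, ind, he']
      · exfalso
        have h0 : IsFlow E D d f2 := by
          refine isFlow_restrict hf2 (fun x hx hxD => ?_)
          rcases Finset.mem_insert.1 hx with rfl | hx'
          · simp [hf2def, ind, he']
          · exact absurd hx' hxD
        linarith [hAmin D hDE hadm f2 h0]
    -- f1 (drev e) = 0 and f2 e = 0
    have hf1e' : f1 (drev e) = 0 := hf1.2.1 _ (by
      simp only [Finset.mem_insert, not_or]
      exact ⟨fun h => hne h.symm, heD'⟩)
    have hf2e' : f2 e = 0 := hf2.2.1 _ (by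
      simp only [Finset.mem_insert, not_or]
      exact ⟨hne, heD⟩)
    obtain ⟨havgflow, havgcost⟩ :=
      isFlow_avg E (insert e D) (insert (drev e) D) d w f1 f2 hf1 hf2
    obtain ⟨h, hhf, hhe, hhee, hhx, hhcost⟩ :=
      flow_cancel E _ d w e heE heE' hne _ havgflow
    -- (already beta reduced)
    rw [hf1e, hf2e', hf1e', hf2e] at hhe hhee hhcost
    norm_num at hhe hhee hhcost
    have hflowD : IsFlow E D d h := by
      refine isFlow_restrict hhf (fun x hx hxD => ?_)
      rcases Finset.mem_union.1 hx with hx' | hx' <;>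
        rcases Finset.mem_insert.1 hx' with rfl | hx'' <;>
        first
          | exact hhe
          | exact hhee
          | exact absurd hx'' hxD
    have hminD := hAmin D hDE hadm h hflowD
    have hw1 := hw e heE
    have hw2 := hw (drev e) heE'
    rw [hhcost, havgcost] at hminD
    linarith
  have pairBoth : ∀ D : Finset (V × V), ∀ e, D ⊆ E → AdmitsFlow E D d → e ∈ E →
      e ∉ D → drev e ∉ D →
      AEq E d A D (insert e D) → AEq E d A D (insert (drev e) D) →
      AEq E d A D (insert e (insert (drev e) D)) := by
    intro D e hDE hadm heE heD heD' hA1 hA2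
    have heE' := hdrev_mem heE
    have hne := hdrev_ne heE
    have hsubS : insert e (insert (drev e) D) ⊆ E :=
      Finset.insert_subset heE (Finset.insert_subset heE' hDE)
    refine (key D _ ((Finset.subset_insert _ _).trans (Finset.subset_insert _ _)) hsubS
      hadm).2 (fun g hg => ?_)
    obtain ⟨h, hhf, hhe, hhee, hhx, hhcost⟩ := flow_cancel E _ d w e heE heE' hne g hg
    have ht0 : 0 ≤ min (g e) (g (drev e)) := le_min (hg.1 e heE).1 (hg.1 _ heE').1
    have hwpos : 0 ≤ w e + w (drev e) := by linarith [hw e heE, hw _ heE']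
    have hcost_le : flowCost E w h ≤ flowCost E w g := by
      rw [hhcost]
      nlinarith
    rcases min_cases (g e) (g (drev e)) with ⟨hmin, -⟩ | ⟨hmin, -⟩
    · -- h e = 0, so h is a flow on insert (drev e) D
      rw [hmin, sub_self] at hhe
      have hflow' : IsFlow E (insert (drev e) D) d h := by
        refine isFlow_restrict hhf (fun x hx hxD => ?_)
        rcases Finset.mem_insert.1 hx with rfl | hx'
        · exact hhe
        · exact absurd hx' hxD
      have := (key D (insert (drev e) D) (Finset.subset_insert _ _)
        (Finset.insert_subset heE' hDE) hadm).1 hA2 h hflow'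
      linarith
    · -- h (drev e) = 0, so h is a flow on insert e D
      rw [hmin, sub_self] at hhee
      have hflow' : IsFlow E (insert e D) d h := by
        refine isFlow_restrict hhf (fun x hx hxD => ?_)
        rcases Finset.mem_insert.1 hx with rfl | hx'
        · exact absurd (Finset.mem_insert_self _ _) hxD
        · rcases Finset.mem_insert.1 hx' with rfl | hx''
          · exact hhee
          · exact absurd (Finset.mem_insert_of_mem hx'') hxD
      have := (key D (insert e D) (Finset.subset_insert _ _)
        (Finset.insert_subset heE hDE) hadm).1 hA1 h hflow'
      linarith
  have notInA : ∀ D' : Finset (V × V), ∀ x, D' ⊆ E → AdmitsFlow E D' d → x ∈ E →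
      x ∈ D' → drev x ∉ D' → ¬ AEq E d A D' (insert (drev x) D') → x ∉ A D' := by
    intro D' x hDE hadm hxE hxD hxD' hnAEq hxA
    have hxE' := hdrev_mem hxE
    have hne := hdrev_ne hxE
    obtain ⟨g, hg, hcg⟩ := keyNot D' _ (Finset.subset_insert _ _)
      (Finset.insert_subset hxE' hDE) hadm hnAEq
    set f' := ind (A D') with hf'def
    have hf' : IsFlow E D' d f' := hAflow D' hDE hadm
    have hf'x : f' x = 1 := by simp [hf'def, ind, hxA]
    have hf'x' : f' (drev x) = 0 := hf'.2.1 _ hxD'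
    obtain ⟨havgflow, havgcost⟩ := isFlow_avg E D' (insert (drev x) D') d w f' g hf' hg
    have hun : D' ∪ insert (drev x) D' = insert (drev x) D' := by
      ext y
      simp only [Finset.mem_union, Finset.mem_insert]
      tauto
    rw [hun] at havgflow
    obtain ⟨h, hhf, hhe, hhee, hhx, hhcost⟩ :=
      flow_cancel E _ d w x hxE hxE' hne _ havgflow
    -- (already beta reduced)
    rw [hf'x, hf'x'] at hhe hhee hhcost
    have hg0 : 0 ≤ g x := (hg.1 x hxE).1
    have hg1 : g (drev x) ≤ 1 := (hg.1 _ hxE').2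
    have hg2 : 0 ≤ g (drev x) := (hg.1 _ hxE').1
    have hminval : min ((1 + g x) / 2) ((0 + g (drev x)) / 2) = (0 + g (drev x)) / 2 := by
      apply min_eq_right
      linarith
    rw [hminval, sub_self] at hhee
    have hflowD : IsFlow E D' d h := by
      refine isFlow_restrict hhf (fun y hy hyD => ?_)
      rcases Finset.mem_insert.1 hy with rfl | hy'
      · exact hhee
      · exact absurd hy' hyD
    have hminD := hAmin D' hDE hadm h hflowD
    have hw1 := hw x hxE
    have hw2 := hw (drev x) hxE'
    rw [hhcost, havgcost, hminval] at hminD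
    nlinarith
  have dropDown : ∀ D' : Finset (V × V), ∀ x, D' ⊆ E → AdmitsFlow E D' d → x ∈ E →
      x ∈ D' → drev x ∉ D' → x ∉ A D' → ¬ AEq E d A D' (insert (drev x) D') →
      ¬ AEq E d A (D' \ {x}) (insert (drev x) (D' \ {x})) := by
    intro D' x hDE hadm hxE hxD hxD' hxA hnAEq hAEq2
    have hxE' := hdrev_mem hxE
    have hne := hdrev_ne hxE
    set D := D' \ {x} with hDdef
    have hDsub : D ⊆ D' := Finset.sdiff_subset
    have hADsub : A D' ⊆ D := by
      intro y hy
      have hyD' := hAsub D' hDE hadm hy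
      simp only [hDdef, Finset.mem_sdiff, Finset.mem_singleton]
      exact ⟨hyD', fun hyx => hxA (hyx ▸ hy)⟩
    obtain ⟨hadmD, hAD⟩ := extend D D' hDsub hDE hadm hADsub
    have hcosteq : flowCost E w (ind (A D)) = flowCost E w (ind (A D')) := by rw [hAD]
    obtain ⟨g, hg, hcg⟩ := keyNot D' _ (Finset.subset_insert _ _)
      (Finset.insert_subset hxE' hDE) hadm hnAEq
    obtain ⟨h, hhf, hhe, hhee, hhx, hhcost⟩ := flow_cancel E _ d w x hxE hxE' hne g hg
    have ht0 : 0 ≤ min (g x) (g (drev x)) := le_min (hg.1 _ hxE).1 (hg.1 _ hxE').1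
    have hwpos : 0 ≤ w x + w (drev x) := by linarith [hw x hxE, hw _ hxE']
    have hcost_le : flowCost E w h ≤ flowCost E w g := by
      rw [hhcost]
      nlinarith
    rcases min_cases (g x) (g (drev x)) with ⟨hmin, -⟩ | ⟨hmin, -⟩
    · -- h x = 0 : h is a flow on insert (drev x) D, whose min cost is that of D
      rw [hmin, sub_self] at hhe
      have hflow' : IsFlow E (insert (drev x) D) d h := by
        refine isFlow_restrict hhf (fun y hy hyD => ?_)
        rcases Finset.mem_insert.1 hy with rfl | hy'
        · exact absurd (Finset.mem_insert_self _ _) hyD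
        · by_cases hyx : y = x
          · exact hyx ▸ hhe
          · refine absurd (Finset.mem_insert_of_mem ?_) hyD
            simp only [hDdef, Finset.mem_sdiff, Finset.mem_singleton]
            exact ⟨hy', hyx⟩
      have := (key D _ (Finset.subset_insert _ _)
        (Finset.insert_subset hxE' (hDsub.trans hDE)) hadmD).1 hAEq2 h hflow'
      rw [hcosteq] at this
      linarith
    · -- h (drev x) = 0 : h is a flow on D'
      rw [hmin, sub_self] at hhee
      have hflow' : IsFlow E D' d h := by
        refine isFlow_restrict hhf (fun y hy hyD => ?_)
        rcases Finset.mem_insert.1 hy with rfl | hy'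
        · exact hhee
        · exact absurd hy' hyD
      have := hAmin D' hDE hadm h hflow'
      linarith
  
  -- helpers about the reference orientation
  have hybStep : ∀ (S : Finset (V × V)) (r : V × V) (D D' : Finset (V × V)),
      S ⊆ E' → r ∈ E' → r ∉ S → Hyb E E' S D → D' ⊆ E →
      (∀ y : V × V, y ≠ r → y ≠ drev r → (y ∈ D' ↔ y ∈ D)) →
      (r ∈ D' ↔ drev r ∉ D') → Hyb E E' (insert r S) D' := by
    intro S r D D' hS hr hrS hhyb hD'E hsame hex
    have hrE : r ∈ E := hE'sub hr
    have hdr : drev r ∉ E' := (hE'or r hrE).1 hr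
    refine ⟨hD'E, ?_, ?_⟩
    · intro r' hr'
      rcases Finset.mem_insert.1 hr' with rfl | h
      · exact hex
      · have hr'E' : r' ∈ E' := hS h
        have h1 : r' ≠ r := fun hq => hrS (hq ▸ h)
        have h2 : r' ≠ drev r := fun hq => hdr (hq ▸ hr'E')
        have h3 : drev r' ≠ r := fun hq => h2 (by rw [← hq, drev_drev])
        have h4 : drev r' ≠ drev r := fun hq => h1 (by
          have := congrArg drev hq
          rwa [drev_drev, drev_drev] at this)
        rw [hsame r' h1 h2, hsame (drev r') h3 h4]
        exact hhyb.2.1 r' h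
    · intro e he hchi
      have hchiS : chi E' e ∉ S := fun hq => hchi (Finset.mem_insert_of_mem hq)
      have hchir : chi E' e ≠ r := fun hq => hchi (hq ▸ Finset.mem_insert_self _ _)
      have h1 : e ≠ r := by
        intro hq; subst hq
        exact hchir (by simp [chi, hr])
      have h2 : e ≠ drev r := by
        intro hq; apply hchir; rw [hq]; simp [chi, hdr, drev_drev]
      have h3 : drev e ≠ r := fun hq => h2 (by rw [← hq, drev_drev])
      have h4 : drev e ≠ drev r := fun hq => h1 (by
        have := congrArg drev hq
        rwa [drev_drev, drev_drev] at this)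
      rw [hsame e h1 h2, hsame (drev e) h3 h4]
      exact hhyb.2.2 e he hchiS
  have hybDown : ∀ (S : Finset (V × V)) (r : V × V) (D' D : Finset (V × V)),
      S ⊆ E' → r ∈ E' → r ∉ S → Hyb E E' (insert r S) D' → D ⊆ E →
      (∀ y : V × V, y ≠ r → y ≠ drev r → (y ∈ D ↔ y ∈ D')) →
      (r ∈ D ↔ drev r ∈ D) → Hyb E E' S D := by
    intro S r D' D hS hr hrS hhyb hDE hsame hpair
    have hrE : r ∈ E := hE'sub hr
    have hdr : drev r ∉ E' := (hE'or r hrE).1 hr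
    refine ⟨hDE, ?_, ?_⟩
    · intro r' h
      have hr'E' : r' ∈ E' := hS h
      have h1 : r' ≠ r := fun hq => hrS (hq ▸ h)
      have h2 : r' ≠ drev r := fun hq => hdr (hq ▸ hr'E')
      have h3 : drev r' ≠ r := fun hq => h2 (by rw [← hq, drev_drev])
      have h4 : drev r' ≠ drev r := fun hq => h1 (by
        have := congrArg drev hq
        rwa [drev_drev, drev_drev] at this)
      rw [hsame r' h1 h2, hsame (drev r') h3 h4]
      exact hhyb.2.1 r' (Finset.mem_insert_of_mem h)
    · intro e he hchi
      by_cases h1 : e = r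
      · subst h1; exact hpair
      · by_cases h2 : e = drev r
        · subst h2
          rw [drev_drev]
          exact hpair.symm
        · have h3 : drev e ≠ r := fun hq => h2 (by rw [← hq, drev_drev])
          have h4 : drev e ≠ drev r := fun hq => h1 (by
            have := congrArg drev hq
            rwa [drev_drev, drev_drev] at this)
          rw [hsame e h1 h2, hsame (drev e) h3 h4]
          refine hhyb.2.2 e he ?_
          intro hq
          rcases Finset.mem_insert.1 hq with hq' | hq'
          · by_cases hc : e ∈ E'
            · exact h1 (by rw [← hq']; simp [chi, hc])
            · exact h2 (by rw [← hq']; simp [chi, hc, drev_drev])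
          · exact hchi hq'
  have hoplusFree : ∀ (D0 : Finset (V × V)) (e : V × V),
      drev e ∉ insert e D0 → oplus D0 e = insert e D0 := by
    intro D0 e h
    show insert e D0 \ {drev e} = insert e D0
    exact sdiff_eq_self_of_disjoint (Finset.disjoint_singleton_right.2 h)
  -- the forward step
  have stepA : ∀ (S : Finset (V × V)) (r : V × V) (D : Finset (V × V)),
      S ⊆ E' → r ∈ E' → r ∉ S → Hyb E E' S D → AdmitsFlow E D d →
      Hyb E E' (insert r S) (phiE E d A E' r D) ∧
        AdmitsFlow E (phiE E d A E' r D) d ∧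
        A (phiE E d A E' r D) = A D ∧
        psiE E d A E' r (phiE E d A E' r D) = D := by
    intro S r D hS hrE' hrS hhyb hadm
    have hrE : r ∈ E := hE'sub hrE'
    have hrEd : drev r ∈ E := hdrev_mem hrE
    have hner : r ≠ drev r := hdrev_ne hrE
    have hner' : drev r ≠ r := fun h => hner h.symm
    have hrchi : chi E' r = r := by simp [chi, hrE']
    have hDE : D ⊆ E := hhyb.1
    have hpr : r ∈ D ↔ drev r ∈ D := hhyb.2.2 r hrE (by rw [hrchi]; exact hrS)
    by_cases hrD : r ∈ D
    · -- both r and drev r belong to D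
      have hrD' : drev r ∈ D := hpr.1 hrD
      have ho1 : oplus D r = D \ {drev r} := by
        simp [oplus, Finset.insert_eq_self.2 hrD]
      have ho2 : oplus D (drev r) = D \ {r} := by
        simp [oplus, drev_drev, Finset.insert_eq_self.2 hrD']
      have hsubE1 : D \ {drev r} ⊆ E := Finset.sdiff_subset.trans hDE
      have hsubE2 : D \ {r} ⊆ E := Finset.sdiff_subset.trans hDE
      have hsubE12 : D \ {r, drev r} ⊆ E := Finset.sdiff_subset.trans hDE
      have hpadd1 : padd (D \ {drev r}) r = D := by
        ext y
        simp only [padd, Finset.mem_union, Finset.mem_sdiff, Finset.mem_singleton,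
          Finset.mem_insert]
        constructor
        · rintro (⟨h, -⟩ | rfl | rfl) <;> assumption
        · intro h
          by_cases hy : y = drev r
          · exact Or.inr (Or.inr hy)
          · exact Or.inl ⟨h, hy⟩
      have hpadd2 : padd (D \ {r}) r = D := by
        ext y
        simp only [padd, Finset.mem_union, Finset.mem_sdiff, Finset.mem_singleton,
          Finset.mem_insert]
        constructor
        · rintro (⟨h, -⟩ | rfl | rfl) <;> assumption
        · intro h
          by_cases hy : y = r
          · exact Or.inr (Or.inl hy)
          · exact Or.inl ⟨h, hy⟩
      have hpsub1 : psub (D \ {drev r}) r = D \ {r, drev r} := by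
        ext y
        simp only [psub, Finset.mem_sdiff, Finset.mem_singleton, Finset.mem_insert]
        tauto
      have hpsub2 : psub (D \ {r}) r = D \ {r, drev r} := by
        ext y
        simp only [psub, Finset.mem_sdiff, Finset.mem_singleton, Finset.mem_insert]
        tauto
      by_cases hAr : r ∈ A D
      · -- the min-cost flow uses r : keep r, delete drev r
        have hAr' : drev r ∉ A D := fun h => notBoth D r hDE hadm hrE ⟨hAr, h⟩
        have hAsub1 : A D ⊆ D \ {drev r} := by
          intro y hy
          simp only [Finset.mem_sdiff, Finset.mem_singleton]
          exact ⟨hAsub D hDE hadm hy, fun hq => hAr' (hq ▸ hy)⟩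
        have hAEq1 : AEq E d A D (D \ {drev r}) :=
          extAEq _ D Finset.sdiff_subset hDE hadm hAsub1
        have hnAEq2 : ¬ AEq E d A D (D \ {r}) :=
          brek D _ r hDE hsubE2 hadm hAr (by simp)
        have hphi : phiE E d A E' r D = D \ {drev r} := by
          unfold phiE
          rw [ho1, ho2, if_neg (not_not_intro hAEq1), if_pos hnAEq2]
        have hadm1 : AdmitsFlow E (D \ {drev r}) d := hAEq1.2.1
        have hAeq1 : A (D \ {drev r}) = A D := hAEq1.2.2.symm
        have hhyb' : Hyb E E' (insert r S) (D \ {drev r}) := by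
          refine hybStep S r D _ hS hrE' hrS hhyb hsubE1 ?_ ?_
          · intro y hy1 hy2
            simp [Finset.mem_sdiff, hy2]
          · simp [Finset.mem_sdiff, hrD, hner, hrD']
        have hpsi : psiE E d A E' r (D \ {drev r}) = D := by
          have hAEqpadd : AEq E d A (D \ {drev r}) (padd (D \ {drev r}) r) := by
            rw [hpadd1]
            exact ⟨hadm1, hadm, hAeq1⟩
          have hnpsub : ¬ AEq E d A (D \ {drev r}) (psub (D \ {drev r}) r) := by
            rw [hpsub1]
            refine brek _ _ r hsubE1 hsubE12 hadm1 ?_ (by simp)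
            rw [hAeq1]; exact hAr
          unfold psiE
          rw [if_neg (not_not_intro hAEqpadd), if_pos hnpsub, hpadd1]
        rw [hphi]
        exact ⟨hhyb', hadm1, hAeq1, hpsi⟩
      · by_cases hAr' : drev r ∈ A D
        · -- the min-cost flow uses drev r : keep drev r, delete r
          have hAsub2 : A D ⊆ D \ {r} := by
            intro y hy
            simp only [Finset.mem_sdiff, Finset.mem_singleton]
            exact ⟨hAsub D hDE hadm hy, fun hq => hAr (hq ▸ hy)⟩
          have hAEq2 : AEq E d A D (D \ {r}) :=
            extAEq _ D Finset.sdiff_subset hDE hadm hAsub2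
          have hnAEq1 : ¬ AEq E d A D (D \ {drev r}) :=
            brek D _ (drev r) hDE hsubE1 hadm hAr' (by simp)
          have hphi : phiE E d A E' r D = D \ {r} := by
            unfold phiE
            rw [ho1, ho2, if_pos hnAEq1]
          have hadm2 : AdmitsFlow E (D \ {r}) d := hAEq2.2.1
          have hAeq2 : A (D \ {r}) = A D := hAEq2.2.2.symm
          have hhyb' : Hyb E E' (insert r S) (D \ {r}) := by
            refine hybStep S r D _ hS hrE' hrS hhyb hsubE2 ?_ ?_
            · intro y hy1 hy2
              simp [Finset.mem_sdiff, hy1]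
            · simp [Finset.mem_sdiff, hrD', hner']
          have hpsi : psiE E d A E' r (D \ {r}) = D := by
            have hAEqpadd : AEq E d A (D \ {r}) (padd (D \ {r}) r) := by
              rw [hpadd2]
              exact ⟨hadm2, hadm, hAeq2⟩
            have hnpsub : ¬ AEq E d A (D \ {r}) (psub (D \ {r}) r) := by
              rw [hpsub2]
              refine brek _ _ (drev r) hsubE2 hsubE12 hadm2 ?_ (by simp)
              rw [hAeq2]; exact hAr'
            unfold psiE
            rw [if_neg (not_not_intro hAEqpadd), if_pos hnpsub, hpadd2]
          rw [hphi]
          exact ⟨hhyb', hadm2, hAeq2, hpsi⟩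
        · -- the min-cost flow uses neither : delete drev r (reference choice)
          have hAsub1 : A D ⊆ D \ {drev r} := by
            intro y hy
            simp only [Finset.mem_sdiff, Finset.mem_singleton]
            exact ⟨hAsub D hDE hadm hy, fun hq => hAr' (hq ▸ hy)⟩
          have hAsub2 : A D ⊆ D \ {r} := by
            intro y hy
            simp only [Finset.mem_sdiff, Finset.mem_singleton]
            exact ⟨hAsub D hDE hadm hy, fun hq => hAr (hq ▸ hy)⟩
          have hAEq1 : AEq E d A D (D \ {drev r}) :=
            extAEq _ D Finset.sdiff_subset hDE hadm hAsub1
          have hAEq2 : AEq E d A D (D \ {r}) :=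
            extAEq _ D Finset.sdiff_subset hDE hadm hAsub2
          have hphi : phiE E d A E' r D = D \ {drev r} := by
            unfold phiE
            rw [hrchi, ho1, ho2, if_neg (not_not_intro hAEq1),
              if_neg (not_not_intro hAEq2), if_pos hrD]
          have hadm1 : AdmitsFlow E (D \ {drev r}) d := hAEq1.2.1
          have hAeq1 : A (D \ {drev r}) = A D := hAEq1.2.2.symm
          have hhyb' : Hyb E E' (insert r S) (D \ {drev r}) := by
            refine hybStep S r D _ hS hrE' hrS hhyb hsubE1 ?_ ?_
            · intro y hy1 hy2
              simp [Finset.mem_sdiff, hy2]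
            · simp [Finset.mem_sdiff, hrD, hner, hrD']
          have hpsi : psiE E d A E' r (D \ {drev r}) = D := by
            have hAEqpadd : AEq E d A (D \ {drev r}) (padd (D \ {drev r}) r) := by
              rw [hpadd1]
              exact ⟨hadm1, hadm, hAeq1⟩
            have hAsub12 : A (D \ {drev r}) ⊆ D \ {r, drev r} := by
              intro y hy
              rw [hAeq1] at hy
              simp only [Finset.mem_sdiff, Finset.mem_singleton, Finset.mem_insert]
              refine ⟨hAsub D hDE hadm hy, ?_⟩
              rintro (rfl | rfl)
              · exact hAr hy
              · exact hAr' hy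
            have hAEqpsub : AEq E d A (D \ {drev r}) (psub (D \ {drev r}) r) := by
              rw [hpsub1]
              refine extAEq _ _ ?_ hsubE1 hadm1 hAsub12
              intro y hy
              simp only [Finset.mem_sdiff, Finset.mem_singleton, Finset.mem_insert] at hy ⊢
              exact ⟨hy.1, fun hq => hy.2 (Or.inr hq)⟩
            have hrmem : chi E' r ∈ D \ {drev r} := by
              rw [hrchi]
              simp only [Finset.mem_sdiff, Finset.mem_singleton]
              exact ⟨hrD, hner⟩
            unfold psiE
            rw [if_neg (not_not_intro hAEqpadd), if_neg (not_not_intro hAEqpsub),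
              if_pos hrmem, hpadd1]
          rw [hphi]
          exact ⟨hhyb', hadm1, hAeq1, hpsi⟩
    · -- neither r nor drev r belongs to D
      have hrD' : drev r ∉ D := fun h => hrD (hpr.2 h)
      have ho1 : oplus D r = insert r D := by
        ext y
        simp only [oplus, Finset.mem_sdiff, Finset.mem_insert, Finset.mem_singleton]
        constructor
        · rintro ⟨h, -⟩; exact h
        · rintro (rfl | h)
          · exact ⟨Or.inl rfl, hner⟩
          · exact ⟨Or.inr h, fun hq => hrD' (hq ▸ h)⟩
      have ho2 : oplus D (drev r) = insert (drev r) D := by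
        ext y
        simp only [oplus, drev_drev, Finset.mem_sdiff, Finset.mem_insert,
          Finset.mem_singleton]
        constructor
        · rintro ⟨h, -⟩; exact h
        · rintro (rfl | h)
          · exact ⟨Or.inl rfl, hner'⟩
          · exact ⟨Or.inr h, fun hq => hrD (hq ▸ h)⟩
      have hsubI1 : insert r D ⊆ E := Finset.insert_subset hrE hDE
      have hsubI2 : insert (drev r) D ⊆ E := Finset.insert_subset hrEd hDE
      have hsubI12 : insert r (insert (drev r) D) ⊆ E :=
        Finset.insert_subset hrE hsubI2
      have hpaddI1 : padd (insert r D) r = insert r (insert (drev r) D) := by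
        ext y
        simp only [padd, Finset.mem_union, Finset.mem_insert, Finset.mem_singleton]
        tauto
      have hpaddI2 : padd (insert (drev r) D) r = insert r (insert (drev r) D) := by
        ext y
        simp only [padd, Finset.mem_union, Finset.mem_insert, Finset.mem_singleton]
        tauto
      have hpsubI1 : psub (insert r D) r = D := by
        ext y
        simp only [psub, Finset.mem_sdiff, Finset.mem_insert, Finset.mem_singleton,
          not_or]
        constructor
        · rintro ⟨rfl | h, hne1, -⟩
          · exact absurd rfl hne1
          · exact h
        · intro h
          exact ⟨Or.inr h, fun hq => hrD (hq ▸ h), fun hq => hrD' (hq ▸ h)⟩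
      have hpsubI2 : psub (insert (drev r) D) r = D := by
        ext y
        simp only [psub, Finset.mem_sdiff, Finset.mem_insert, Finset.mem_singleton,
          not_or]
        constructor
        · rintro ⟨rfl | h, -, hne2⟩
          · exact absurd rfl hne2
          · exact h
        · intro h
          exact ⟨Or.inr h, fun hq => hrD (hq ▸ h), fun hq => hrD' (hq ▸ h)⟩
      by_cases h1 : AEq E d A D (insert r D)
      · by_cases h2 : AEq E d A D (insert (drev r) D)
        · -- both extensions fine : add drev r (reference choice)
          have hbig : AEq E d A D (insert r (insert (drev r) D)) :=
            pairBoth D r hDE hadm hrE hrD hrD' h1 h2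
          have hphi : phiE E d A E' r D = insert (drev r) D := by
            unfold phiE
            rw [hrchi, ho1, ho2, if_neg (not_not_intro h1),
              if_neg (not_not_intro h2), if_neg hrD]
          have hadm2 : AdmitsFlow E (insert (drev r) D) d := h2.2.1
          have hAeq2 : A (insert (drev r) D) = A D := h2.2.2.symm
          have hhyb' : Hyb E E' (insert r S) (insert (drev r) D) := by
            refine hybStep S r D _ hS hrE' hrS hhyb hsubI2 ?_ ?_
            · intro y hy1 hy2
              simp [Finset.mem_insert, hy2]
            · simp [Finset.mem_insert, hner, hrD]
          have hpsi : psiE E d A E' r (insert (drev r) D) = D := by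
            have hAEqpadd : AEq E d A (insert (drev r) D)
                (padd (insert (drev r) D) r) := by
              rw [hpaddI2]
              exact ⟨hadm2, hbig.2.1, hAeq2.trans hbig.2.2⟩
            have hAEqpsub : AEq E d A (insert (drev r) D)
                (psub (insert (drev r) D) r) := by
              rw [hpsubI2]
              exact ⟨hadm2, hadm, hAeq2⟩
            have hrmem : chi E' r ∉ insert (drev r) D := by
              rw [hrchi]
              simp only [Finset.mem_insert, not_or]
              exact ⟨hner, hrD⟩
            unfold psiE
            rw [if_neg (not_not_intro hAEqpadd), if_neg (not_not_intro hAEqpsub),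
              if_neg hrmem, hpsubI2]
          rw [hphi]
          exact ⟨hhyb', hadm2, hAeq2, hpsi⟩
        · -- adding drev r changes A : add r
          have hphi : phiE E d A E' r D = insert r D := by
            unfold phiE
            rw [ho1, ho2, if_neg (not_not_intro h1), if_pos h2]
          have hadm1 : AdmitsFlow E (insert r D) d := h1.2.1
          have hAeq1 : A (insert r D) = A D := h1.2.2.symm
          have hhyb' : Hyb E E' (insert r S) (insert r D) := by
            refine hybStep S r D _ hS hrE' hrS hhyb hsubI1 ?_ ?_
            · intro y hy1 hy2
              simp [Finset.mem_insert, hy1]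
            · simp [Finset.mem_insert, hner', hrD']
          have hpsi : psiE E d A E' r (insert r D) = D := by
            have hnpadd : ¬ AEq E d A (insert r D) (padd (insert r D) r) := by
              rw [hpaddI1]
              intro hq
              obtain ⟨g, hg, hcg⟩ := keyNot D (insert (drev r) D)
                (Finset.subset_insert _ _) hsubI2 hadm h2
              have hg' : IsFlow E (insert r (insert (drev r) D)) d g :=
                isFlow_mono (Finset.subset_insert _ _) hg
              have hle := (key (insert r D) _
                (Finset.insert_subset_insert _ (Finset.subset_insert _ _))
                hsubI12 hadm1).1 hq g hg'
              rw [hAeq1] at hle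
              linarith
            unfold psiE
            rw [if_pos hnpadd, hpsubI1]
          rw [hphi]
          exact ⟨hhyb', hadm1, hAeq1, hpsi⟩
      · -- adding r changes A : add drev r
        have h2 : AEq E d A D (insert (drev r) D) := by
          rcases pairAdd D r hDE hadm hrE hrD hrD' with h | h
          · exact absurd h h1
          · exact h
        have hphi : phiE E d A E' r D = insert (drev r) D := by
          unfold phiE
          rw [ho1, ho2, if_pos h1]
        have hadm2 : AdmitsFlow E (insert (drev r) D) d := h2.2.1
        have hAeq2 : A (insert (drev r) D) = A D := h2.2.2.symm
        have hhyb' : Hyb E E' (insert r S) (insert (drev r) D) := by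
          refine hybStep S r D _ hS hrE' hrS hhyb hsubI2 ?_ ?_
          · intro y hy1 hy2
            simp [Finset.mem_insert, hy2]
          · simp [Finset.mem_insert, hner, hrD]
        have hpsi : psiE E d A E' r (insert (drev r) D) = D := by
          have hnpadd : ¬ AEq E d A (insert (drev r) D)
              (padd (insert (drev r) D) r) := by
            rw [hpaddI2]
            intro hq
            obtain ⟨g, hg, hcg⟩ := keyNot D (insert r D)
              (Finset.subset_insert _ _) hsubI1 hadm h1
            have hg' : IsFlow E (insert r (insert (drev r) D)) d g :=
              isFlow_mono (Finset.insert_subset_insert _ (Finset.subset_insert _ _)) hg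
            have hle := (key (insert (drev r) D) _
              (Finset.subset_insert _ _) hsubI12 hadm2).1 hq g hg'
            rw [hAeq2] at hle
            linarith
          unfold psiE
          rw [if_pos hnpadd, hpsubI2]
        rw [hphi]
        exact ⟨hhyb', hadm2, hAeq2, hpsi⟩
  
  -- the backward step
  have stepB : ∀ (S : Finset (V × V)) (r : V × V) (D' : Finset (V × V)),
      S ⊆ E' → r ∈ E' → r ∉ S → Hyb E E' (insert r S) D' → AdmitsFlow E D' d →
      Hyb E E' S (psiE E d A E' r D') ∧
        AdmitsFlow E (psiE E d A E' r D') d ∧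
        phiE E d A E' r (psiE E d A E' r D') = D' := by
    intro S r D' hS hrE' hrS hhyb hadm'
    have hrE : r ∈ E := hE'sub hrE'
    have hrEd : drev r ∈ E := hdrev_mem hrE
    have hner : r ≠ drev r := hdrev_ne hrE
    have hner' : drev r ≠ r := fun h => hner h.symm
    have hrchi : chi E' r = r := by simp [chi, hrE']
    have hD'E : D' ⊆ E := hhyb.1
    have hex : r ∈ D' ↔ drev r ∉ D' := hhyb.2.1 r (Finset.mem_insert_self _ _)
    by_cases hrD : r ∈ D'
    · -- the edge r is the one present in D'
      have hdrD : drev r ∉ D' := hex.1 hrD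
      have hpaddx : padd D' r = insert (drev r) D' := by
        ext y
        simp only [padd, Finset.mem_union, Finset.mem_insert, Finset.mem_singleton]
        constructor
        · rintro (h | rfl | rfl)
          · exact Or.inr h
          · exact Or.inr hrD
          · exact Or.inl rfl
        · rintro (rfl | h)
          · exact Or.inr (Or.inr rfl)
          · exact Or.inl h
      have hpsubx : psub D' r = D' \ {r} := by
        ext y
        simp only [psub, Finset.mem_sdiff, Finset.mem_insert, Finset.mem_singleton,
          not_or]
        constructor
        · rintro ⟨h1, h2, -⟩
          exact ⟨h1, h2⟩
        · rintro ⟨h1, h2⟩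
          exact ⟨h1, h2, fun hq => hdrD (hq ▸ h1)⟩
      have hins : insert r (D' \ {r}) = D' := by
        ext y
        simp only [Finset.mem_insert, Finset.mem_sdiff, Finset.mem_singleton]
        constructor
        · rintro (rfl | ⟨h, -⟩)
          · exact hrD
          · exact h
        · intro h
          by_cases hy : y = r
          · exact Or.inl hy
          · exact Or.inr ⟨h, hy⟩
      have hd1 : insert (drev r) D' \ {drev r} = D' := by
        ext y
        simp only [Finset.mem_sdiff, Finset.mem_insert, Finset.mem_singleton]
        constructor
        · rintro ⟨rfl | h, hne⟩
          · exact absurd rfl hne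
          · exact h
        · intro h
          exact ⟨Or.inr h, fun hq => hdrD (hq ▸ h)⟩
      have hsubD : insert (drev r) D' ⊆ E := Finset.insert_subset hrEd hD'E
      have hsubS : D' \ {r} ⊆ E := Finset.sdiff_subset.trans hD'E
      by_cases hp : AEq E d A D' (padd D' r)
      · have hp' : AEq E d A D' (insert (drev r) D') := by rwa [hpaddx] at hp
        have hadmD : AdmitsFlow E (insert (drev r) D') d := hp'.2.1
        have hAeqD : A (insert (drev r) D') = A D' := hp'.2.2.symm
        have hdrA : drev r ∉ A D' := fun h => hdrD (hAsub D' hD'E hadm' h)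
        have hrD2 : r ∈ insert (drev r) D' := Finset.mem_insert_of_mem hrD
        have hdrD2 : drev r ∈ insert (drev r) D' := Finset.mem_insert_self _ _
        have ho1 : oplus (insert (drev r) D') r = insert (drev r) D' \ {drev r} := by
          simp [oplus, Finset.insert_eq_self.2 hrD2]
        have ho2 : oplus (insert (drev r) D') (drev r) = insert (drev r) D' \ {r} := by
          simp [oplus, drev_drev, Finset.insert_eq_self.2 hdrD2]
        have hhybD : Hyb E E' S (insert (drev r) D') := by
          refine hybDown S r D' _ hS hrE' hrS hhyb hsubD ?_ ?_
          · intro y hy1 hy2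
            simp [Finset.mem_insert, hy2]
          · exact iff_of_true hrD2 hdrD2
        by_cases hs : AEq E d A D' (psub D' r)
        · -- case γ with r ∈ D'
          have hs' : AEq E d A D' (D' \ {r}) := by rwa [hpsubx] at hs
          have hrA : r ∉ A D' := fun h =>
            brek D' (D' \ {r}) r hD'E hsubS hadm' h (by simp) hs'
          have hpsi : psiE E d A E' r D' = insert (drev r) D' := by
            unfold psiE
            rw [if_neg (not_not_intro hp), if_neg (not_not_intro hs), hrchi,
              if_pos hrD, hpaddx]
          have hAEq2 : AEq E d A (insert (drev r) D') (insert (drev r) D' \ {r}) := by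
            refine extAEq _ _ Finset.sdiff_subset hsubD hadmD ?_
            intro y hy
            rw [hAeqD] at hy
            simp only [Finset.mem_sdiff, Finset.mem_singleton]
            exact ⟨Finset.mem_insert_of_mem (hAsub D' hD'E hadm' hy),
              fun hq => hrA (hq ▸ hy)⟩
          have hAEqDD' : AEq E d A (insert (drev r) D') D' := ⟨hadmD, hadm', hAeqD⟩
          have hphi : phiE E d A E' r (insert (drev r) D') = D' := by
            unfold phiE
            rw [hrchi, ho1, ho2, hd1, if_neg (not_not_intro hAEqDD'),
              if_neg (not_not_intro hAEq2), if_pos hrD2]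
          rw [hpsi]
          exact ⟨hhybD, hadmD, hphi⟩
        · -- case β with r ∈ D' : r is used by the min-cost flow
          have hrA : r ∈ A D' := by
            by_contra hrA
            apply hs
            rw [hpsubx]
            refine extAEq _ D' Finset.sdiff_subset hD'E hadm' ?_
            intro y hy
            simp only [Finset.mem_sdiff, Finset.mem_singleton]
            exact ⟨hAsub D' hD'E hadm' hy, fun hq => hrA (hq ▸ hy)⟩
          have hpsi : psiE E d A E' r D' = insert (drev r) D' := by
            unfold psiE
            rw [if_neg (not_not_intro hp), if_pos hs, hpaddx]
          have hnAEq2 : ¬ AEq E d A (insert (drev r) D') (insert (drev r) D' \ {r}) := by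
            refine brek _ _ r hsubD (Finset.sdiff_subset.trans hsubD) hadmD ?_ (by simp)
            rw [hAeqD]; exact hrA
          have hAEqDD' : AEq E d A (insert (drev r) D') D' := ⟨hadmD, hadm', hAeqD⟩
          have hphi : phiE E d A E' r (insert (drev r) D') = D' := by
            unfold phiE
            rw [ho1, ho2, hd1, if_neg (not_not_intro hAEqDD'), if_pos hnAEq2]
          rw [hpsi]
          exact ⟨hhybD, hadmD, hphi⟩
      · -- case α with r ∈ D' : delete r
        have hp' : ¬ AEq E d A D' (insert (drev r) D') := by rwa [hpaddx] at hp
        have hrA : r ∉ A D' := notInA D' r hD'E hadm' hrE hrD hdrD hp'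
        have hADsub : A D' ⊆ D' \ {r} := by
          intro y hy
          simp only [Finset.mem_sdiff, Finset.mem_singleton]
          exact ⟨hAsub D' hD'E hadm' hy, fun hq => hrA (hq ▸ hy)⟩
        obtain ⟨hadmD, hAD⟩ := extend (D' \ {r}) D' Finset.sdiff_subset hD'E hadm' hADsub
        have hnd : ¬ AEq E d A (D' \ {r}) (insert (drev r) (D' \ {r})) :=
          dropDown D' r hD'E hadm' hrE hrD hdrD hrA hp'
        have hpsi : psiE E d A E' r D' = D' \ {r} := by
          unfold psiE
          rw [if_pos hp, hpsubx]
        have hrDm : r ∉ D' \ {r} := by simp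
        have hdrDm : drev r ∉ D' \ {r} := fun h => hdrD (Finset.mem_sdiff.1 h).1
        have ho1 : oplus (D' \ {r}) r = insert r (D' \ {r}) :=
          hoplusFree _ _ (by simp [hner', hdrDm])
        have ho2 : oplus (D' \ {r}) (drev r) = insert (drev r) (D' \ {r}) :=
          hoplusFree _ _ (by simp [drev_drev, hner, hrDm])
        have hAEqDD' : AEq E d A (D' \ {r}) D' := ⟨hadmD, hadm', hAD⟩
        have hphi : phiE E d A E' r (D' \ {r}) = D' := by
          unfold phiE
          rw [ho1, ho2, hins, if_neg (not_not_intro hAEqDD'), if_pos hnd]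
        have hhybD : Hyb E E' S (D' \ {r}) := by
          refine hybDown S r D' _ hS hrE' hrS hhyb hsubS ?_ ?_
          · intro y hy1 hy2
            simp [Finset.mem_sdiff, hy1]
          · exact iff_of_false hrDm hdrDm
        rw [hpsi]
        exact ⟨hhybD, hadmD, hphi⟩
    · -- the edge drev r is the one present in D'
      have hdrD : drev r ∈ D' := by
        by_contra h
        exact hrD (hex.2 h)
      have hpaddx : padd D' r = insert r D' := by
        ext y
        simp only [padd, Finset.mem_union, Finset.mem_insert, Finset.mem_singleton]
        constructor
        · rintro (h | rfl | rfl)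
          · exact Or.inr h
          · exact Or.inl rfl
          · exact Or.inr hdrD
        · rintro (rfl | h)
          · exact Or.inr (Or.inl rfl)
          · exact Or.inl h
      have hpsubx : psub D' r = D' \ {drev r} := by
        ext y
        simp only [psub, Finset.mem_sdiff, Finset.mem_insert, Finset.mem_singleton,
          not_or]
        constructor
        · rintro ⟨h1, -, h3⟩
          exact ⟨h1, h3⟩
        · rintro ⟨h1, h2⟩
          exact ⟨h1, fun hq => hrD (hq ▸ h1), h2⟩
      have hins : insert (drev r) (D' \ {drev r}) = D' := by
        ext y
        simp only [Finset.mem_insert, Finset.mem_sdiff, Finset.mem_singleton]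
        constructor
        · rintro (rfl | ⟨h, -⟩)
          · exact hdrD
          · exact h
        · intro h
          by_cases hy : y = drev r
          · exact Or.inl hy
          · exact Or.inr ⟨h, hy⟩
      have hd2 : insert r D' \ {r} = D' := by
        ext y
        simp only [Finset.mem_sdiff, Finset.mem_insert, Finset.mem_singleton]
        constructor
        · rintro ⟨rfl | h, hne⟩
          · exact absurd rfl hne
          · exact h
        · intro h
          exact ⟨Or.inr h, fun hq => hrD (hq ▸ h)⟩
      have hsubD : insert r D' ⊆ E := Finset.insert_subset hrE hD'E
      have hsubS : D' \ {drev r} ⊆ E := Finset.sdiff_subset.trans hD'E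
      have hrA : r ∉ A D' := fun h => hrD (hAsub D' hD'E hadm' h)
      by_cases hp : AEq E d A D' (padd D' r)
      · have hp' : AEq E d A D' (insert r D') := by rwa [hpaddx] at hp
        by_cases hs : AEq E d A D' (psub D' r)
        · -- case γ with r ∉ D' : delete drev r
          have hs' : AEq E d A D' (D' \ {drev r}) := by rwa [hpsubx] at hs
          have hadmD : AdmitsFlow E (D' \ {drev r}) d := hs'.2.1
          have hAD : A (D' \ {drev r}) = A D' := hs'.2.2.symm
          have hdrA : drev r ∉ A D' := fun h =>
            brek D' (D' \ {drev r}) (drev r) hD'E hsubS hadm' h (by simp) hs'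
          have hpsi : psiE E d A E' r D' = D' \ {drev r} := by
            unfold psiE
            rw [if_neg (not_not_intro hp), if_neg (not_not_intro hs), hrchi,
              if_neg hrD, hpsubx]
          have hrDm : r ∉ D' \ {drev r} := fun h => hrD (Finset.mem_sdiff.1 h).1
          have hdrDm : drev r ∉ D' \ {drev r} := by simp
          have ho1 : oplus (D' \ {drev r}) r = insert r (D' \ {drev r}) :=
            hoplusFree _ _ (by simp [hner', hdrDm])
          have ho2 : oplus (D' \ {drev r}) (drev r) = insert (drev r) (D' \ {drev r}) :=
            hoplusFree _ _ (by simp [drev_drev, hner, hrDm])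
          have hAEq2 : AEq E d A (D' \ {drev r}) (insert (drev r) (D' \ {drev r})) := by
            rw [hins]
            exact ⟨hadmD, hadm', hAD⟩
          have hAEq1 : AEq E d A (D' \ {drev r}) (insert r (D' \ {drev r})) := by
            refine sandwich _ _ (insert r D') (Finset.subset_insert _ _)
              (Finset.insert_subset_insert _ Finset.sdiff_subset) hsubD hadmD ?_
            exact ⟨hadmD, hp'.2.1, hAD.trans hp'.2.2⟩
          have hphi : phiE E d A E' r (D' \ {drev r}) = D' := by
            unfold phiE
            rw [hrchi, ho1, ho2, if_neg (not_not_intro hAEq1),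
              if_neg (not_not_intro hAEq2), if_neg hrDm]
            exact hins
          have hhybD : Hyb E E' S (D' \ {drev r}) := by
            refine hybDown S r D' _ hS hrE' hrS hhyb hsubS ?_ ?_
            · intro y hy1 hy2
              simp [Finset.mem_sdiff, hy2]
            · exact iff_of_false hrDm hdrDm
          rw [hpsi]
          exact ⟨hhybD, hadmD, hphi⟩
        · -- case β with r ∉ D' : drev r used by the min-cost flow, add r
          have hadmD : AdmitsFlow E (insert r D') d := hp'.2.1
          have hAD : A (insert r D') = A D' := hp'.2.2.symm
          have hdrA : drev r ∈ A D' := by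
            by_contra hdrA
            apply hs
            rw [hpsubx]
            refine extAEq _ D' Finset.sdiff_subset hD'E hadm' ?_
            intro y hy
            simp only [Finset.mem_sdiff, Finset.mem_singleton]
            exact ⟨hAsub D' hD'E hadm' hy, fun hq => hdrA (hq ▸ hy)⟩
          have hpsi : psiE E d A E' r D' = insert r D' := by
            unfold psiE
            rw [if_neg (not_not_intro hp), if_pos hs, hpaddx]
          have hrD2 : r ∈ insert r D' := Finset.mem_insert_self _ _
          have hdrD2 : drev r ∈ insert r D' := Finset.mem_insert_of_mem hdrD
          have ho1 : oplus (insert r D') r = insert r D' \ {drev r} := by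
            simp [oplus, Finset.insert_eq_self.2 hrD2]
          have ho2 : oplus (insert r D') (drev r) = insert r D' \ {r} := by
            simp [oplus, drev_drev, Finset.insert_eq_self.2 hdrD2]
          have hnAEq1 : ¬ AEq E d A (insert r D') (insert r D' \ {drev r}) := by
            refine brek _ _ (drev r) hsubD (Finset.sdiff_subset.trans hsubD) hadmD ?_
              (by simp)
            rw [hAD]; exact hdrA
          have hphi : phiE E d A E' r (insert r D') = D' := by
            unfold phiE
            rw [ho1, ho2, if_pos hnAEq1]
            exact hd2
          have hhybD : Hyb E E' S (insert r D') := by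
            refine hybDown S r D' _ hS hrE' hrS hhyb hsubD ?_ ?_
            · intro y hy1 hy2
              simp [Finset.mem_insert, hy1]
            · exact iff_of_true hrD2 hdrD2
          rw [hpsi]
          exact ⟨hhybD, hadmD, hphi⟩
      · -- case α with r ∉ D' : delete drev r
        have hp' : ¬ AEq E d A D' (insert r D') := by rwa [hpaddx] at hp
        have hdrA : drev r ∉ A D' :=
          notInA D' (drev r) hD'E hadm' hrEd hdrD
            (by rw [drev_drev]; exact hrD) (by rw [drev_drev]; exact hp')
        have hADsub : A D' ⊆ D' \ {drev r} := by
          intro y hy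
          simp only [Finset.mem_sdiff, Finset.mem_singleton]
          exact ⟨hAsub D' hD'E hadm' hy, fun hq => hdrA (hq ▸ hy)⟩
        obtain ⟨hadmD, hAD⟩ :=
          extend (D' \ {drev r}) D' Finset.sdiff_subset hD'E hadm' hADsub
        have hnd : ¬ AEq E d A (D' \ {drev r}) (insert r (D' \ {drev r})) := by
          have := dropDown D' (drev r) hD'E hadm' hrEd hdrD
            (by rw [drev_drev]; exact hrD) hdrA (by rw [drev_drev]; exact hp')
          rwa [drev_drev] at this
        have hpsi : psiE E d A E' r D' = D' \ {drev r} := by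
          unfold psiE
          rw [if_pos hp, hpsubx]
        have hrDm : r ∉ D' \ {drev r} := fun h => hrD (Finset.mem_sdiff.1 h).1
        have hdrDm : drev r ∉ D' \ {drev r} := by simp
        have ho1 : oplus (D' \ {drev r}) r = insert r (D' \ {drev r}) :=
          hoplusFree _ _ (by simp [hner', hdrDm])
        have ho2 : oplus (D' \ {drev r}) (drev r) = insert (drev r) (D' \ {drev r}) :=
          hoplusFree _ _ (by simp [drev_drev, hner, hrDm])
        have hphi : phiE E d A E' r (D' \ {drev r}) = D' := by
          unfold phiE
          rw [ho1, ho2, if_pos hnd]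
          exact hins
        have hhybD : Hyb E E' S (D' \ {drev r}) := by
          refine hybDown S r D' _ hS hrE' hrS hhyb hsubS ?_ ?_
          · intro y hy1 hy2
            simp [Finset.mem_sdiff, hy2]
          · exact iff_of_false hrDm hdrDm
        rw [hpsi]
        exact ⟨hhybD, hadmD, hphi⟩
  -- iterate the elementary bijections over the reference orientation
  have main : ∀ S : Finset (V × V), S ⊆ E' →
      ∃ φ : {D : Finset (V × V) // Hyb E E' ∅ D ∧ AdmitsFlow E D d} ≃
            {D : Finset (V × V) // Hyb E E' S D ∧ AdmitsFlow E D d},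
        ∀ K, A (φ K).1 = A K.1 := by
    intro S
    induction S using Finset.induction_on with
    | empty => exact fun _ => ⟨Equiv.refl _, fun K => rfl⟩
    | @insert r S hrS ih =>
      intro hins
      have hSsub : S ⊆ E' := fun y hy => hins (Finset.mem_insert_of_mem hy)
      have hrE' : r ∈ E' := hins (Finset.mem_insert_self _ _)
      obtain ⟨φ0, hφ0⟩ := ih hSsub
      refine ⟨φ0.trans
        ⟨fun D => ⟨phiE E d A E' r D.1,
            (stepA S r D.1 hSsub hrE' hrS D.2.1 D.2.2).1,
            (stepA S r D.1 hSsub hrE' hrS D.2.1 D.2.2).2.1⟩,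
          fun D' => ⟨psiE E d A E' r D'.1,
            (stepB S r D'.1 hSsub hrE' hrS D'.2.1 D'.2.2).1,
            (stepB S r D'.1 hSsub hrE' hrS D'.2.1 D'.2.2).2.1⟩, ?_, ?_⟩, ?_⟩
      · intro D
        exact Subtype.ext (stepA S r D.1 hSsub hrE' hrS D.2.1 D.2.2).2.2.2
      · intro D'
        exact Subtype.ext (stepB S r D'.1 hSsub hrE' hrS D'.2.1 D'.2.2).2.2
      · intro K
        simp only [Equiv.trans_apply, Equiv.coe_fn_mk]
        rw [(stepA S r (φ0 K).1 hSsub hrE' hrS (φ0 K).2.1 (φ0 K).2.2).2.2.1]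
        exact hφ0 K
  obtain ⟨φ, hφ⟩ := main E' (le_refl _)
  have hyb_empty : ∀ K : Finset (V × V),
      (IsSubgraph E K ∧ AdmitsFlow E K d) ↔ (Hyb E E' ∅ K ∧ AdmitsFlow E K d) := by
    intro K
    constructor
    · rintro ⟨⟨h1, h2⟩, h4⟩
      exact ⟨⟨h1, fun x hx => absurd hx (Finset.notMem_empty x),
        fun e he _ => h2 e he⟩, h4⟩
    · rintro ⟨⟨h1, -, h3⟩, h4⟩
      exact ⟨⟨h1, fun e he => h3 e he (Finset.notMem_empty _)⟩, h4⟩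
  have hyb_full : ∀ K : Finset (V × V),
      (Hyb E E' E' K ∧ AdmitsFlow E K d) ↔ (IsOrientation E K ∧ AdmitsFlow E K d) := by
    intro K
    constructor
    · rintro ⟨⟨h1, h2, -⟩, h4⟩
      refine ⟨⟨h1, fun e he => ?_⟩, h4⟩
      by_cases hc : e ∈ E'
      · exact h2 e hc
      · have hcd : drev e ∈ E' := not_not.1 (fun hq => hc ((hE'or e he).2 hq))
        have hthis := h2 (drev e) hcd
        rw [drev_drev] at hthis
        rw [hthis, not_not]
    · rintro ⟨⟨h1, h2⟩, h4⟩
      refine ⟨⟨h1, fun x hx => h2 x (hE'sub hx), fun e he hchi => absurd ?_ hchi⟩, h4⟩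
      by_cases hc : e ∈ E'
      · simpa [chi, hc] using hc
      · have hcd : drev e ∈ E' := not_not.1 (fun hq => hc ((hE'or e he).2 hq))
        simpa [chi, hc] using hcd
  refine ⟨((Equiv.subtypeEquivRight hyb_empty).trans φ).trans
    (Equiv.subtypeEquivRight hyb_full), fun K => ?_⟩
  simp only [Equiv.trans_apply]
  have e2 : ∀ L : {D : Finset (V × V) // Hyb E E' E' D ∧ AdmitsFlow E D d},
      ((Equiv.subtypeEquivRight hyb_full) L).1 = L.1 := fun L => rfl
  rw [e2]
  exact hφ _
end

section
/- Let D ⊆ E admit a d-flow and let e ∈ E. Then A(D ⊕ e) = A(D) or A(D ⊕ rev e) = A(D); that is, there exists e' ∈ {e, rev e} such that D ⊕ e' admits a d-flow and its unique min-cost d-flow coincides with A(D). -/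
open Finset

section Aux

variable {V : Type*} [Fintype V] [DecidableEq V]

lemma flow_mono {E S S' : Finset (V × V)} {d : V → ℤ} {f : V × V → ℝ}
    (h : IsFlow E S d f) (hss : S ⊆ S') : IsFlow E S' d f :=
  ⟨h.1, fun x hx => h.2.1 x (fun hh => hx (hss hh)), h.2.2⟩

lemma flow_combo {E S S' : Finset (V × V)} {d : V → ℤ} {g g' : V × V → ℝ} {l : ℝ}
    (hg : IsFlow E S d g) (hg' : IsFlow E S' d g') (h0 : 0 ≤ l) (h1 : l ≤ 1) :
    IsFlow E (S ∪ S') d (fun x => l * g x + (1 - l) * g' x) := by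
  refine ⟨?_, ?_, ?_⟩
  · intro x hx
    have a := hg.1 x hx; have b := hg'.1 x hx
    constructor <;> dsimp only <;> nlinarith [a.1, a.2, b.1, b.2]
  · intro x hx
    simp only [Finset.mem_union] at hx; push_neg at hx
    dsimp only; rw [hg.2.1 x hx.1, hg'.2.1 x hx.2]; ring
  · intro u
    have a := hg.2.2 u; have b := hg'.2.2 u
    simp only [Finset.sum_add_distrib, ← Finset.mul_sum]
    linear_combination l * a + (1 - l) * b

lemma cost_combo {E : Finset (V × V)} {w g g' : V × V → ℝ} {l : ℝ} :
    flowCost E w (fun x => l * g x + (1 - l) * g' x)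
      = l * flowCost E w g + (1 - l) * flowCost E w g' := by
  simp only [flowCost, Finset.mul_sum, ← Finset.sum_add_distrib]
  exact Finset.sum_congr rfl fun x _ => by ring

lemma sum_ite_out (E : Finset (V × V)) (c : V × V) (hc : c ∈ E) (t : ℝ) (u : V) :
    (∑ v ∈ Finset.univ.filter (fun v : V => (u, v) ∈ E), (if (u, v) = c then t else 0))
      = if u = c.1 then t else 0 := by
  by_cases hu : u = c.1
  · subst hu
    rw [if_pos rfl]
    have h1 : ∀ v : V, ((c.1, v) = c) = (v = c.2) := by
      intro v
      simp [Prod.ext_iff]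
    simp only [h1]
    rw [Finset.sum_ite_eq' (Finset.univ.filter fun v : V => (c.1, v) ∈ E) c.2 fun _ => t]
    rw [if_pos]
    simp only [Finset.mem_filter, Finset.mem_univ, true_and]
    exact hc
  · rw [if_neg hu, Finset.sum_eq_zero]
    intro v _
    rw [if_neg]
    intro h
    exact hu (congrArg Prod.fst h)

lemma sum_ite_in (E : Finset (V × V)) (c : V × V) (hc : c ∈ E) (t : ℝ) (u : V) :
    (∑ v ∈ Finset.univ.filter (fun v : V => (v, u) ∈ E), (if (v, u) = c then t else 0))
      = if u = c.2 then t else 0 := by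
  by_cases hu : u = c.2
  · subst hu
    rw [if_pos rfl]
    have h1 : ∀ v : V, ((v, c.2) = c) = (v = c.1) := by
      intro v
      simp [Prod.ext_iff]
    simp only [h1]
    rw [Finset.sum_ite_eq' (Finset.univ.filter fun v : V => (v, c.2) ∈ E) c.1 fun _ => t]
    rw [if_pos]
    simp only [Finset.mem_filter, Finset.mem_univ, true_and]
    exact hc
  · rw [if_neg hu, Finset.sum_eq_zero]
    intro v _
    rw [if_neg]
    intro h
    exact hu (congrArg Prod.snd h)

/-- Cancelling `t` units on both `e` and `drev e` preserves flow-ness. -/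
lemma flow_cancel_s5 {E D : Finset (V × V)} {d : V → ℤ} {h : V × V → ℝ} {e : V × V}
    (he : e ∈ E) (hrev : drev e ∈ E) (hne : e ≠ drev e)
    (hflow : IsFlow E D d h) {t : ℝ} (ht0 : 0 ≤ t) (hte : t ≤ h e) (htr : t ≤ h (drev e)) :
    IsFlow E D d
      (fun x => h x - ((if x = e then t else 0) + (if x = drev e then t else 0))) := by
  refine ⟨?_, ?_, ?_⟩
  · intro x hx
    have a := hflow.1 x hx
    dsimp only
    by_cases h1 : x = e
    · subst h1; rw [if_pos rfl, if_neg hne]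
      constructor <;> simp <;> linarith [a.2]
    · by_cases h2 : x = drev e
      · subst h2; rw [if_neg (fun hh => hne hh.symm), if_pos rfl]
        constructor <;> simp <;> linarith [a.2]
      · rw [if_neg h1, if_neg h2]
        constructor <;> simp <;> linarith [a.1, a.2]
  · intro x hx
    have h0 := hflow.2.1 x hx
    dsimp only
    by_cases h1 : x = e
    · subst h1; rw [if_pos rfl, if_neg hne, h0]
      have : t = 0 := le_antisymm (h0 ▸ hte) ht0
      rw [this]; ring
    · by_cases h2 : x = drev e
      · subst h2; rw [if_neg (fun hh => hne hh.symm), if_pos rfl, h0]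
        have : t = 0 := le_antisymm (h0 ▸ htr) ht0
        rw [this]; ring
      · rw [if_neg h1, if_neg h2, h0]; ring
  · intro u
    have key := hflow.2.2 u
    simp only [Finset.sum_sub_distrib, Finset.sum_add_distrib]
    rw [sum_ite_out E e he t u, sum_ite_out E (drev e) hrev t u,
        sum_ite_in E e he t u, sum_ite_in E (drev e) hrev t u]
    have hd1 : (drev e).1 = e.2 := rfl
    have hd2 : (drev e).2 = e.1 := rfl
    rw [hd1, hd2]
    linarith [key]

lemma cost_cancel {E : Finset (V × V)} {w h : V × V → ℝ} {e : V × V}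
    (he : e ∈ E) (hrev : drev e ∈ E) (hne : e ≠ drev e) (t : ℝ) :
    flowCost E w
        (fun x => h x - ((if x = e then t else 0) + (if x = drev e then t else 0)))
      = flowCost E w h - (w e * t + w (drev e) * t) := by
  simp only [flowCost]
  have hstep : ∀ x ∈ E,
      w x * (h x - ((if x = e then t else 0) + (if x = drev e then t else 0)))
        = w x * h x
          - ((if x = e then w x * t else 0) + (if x = drev e then w x * t else 0)) := by
    intro x _
    split_ifs <;> ring
  rw [Finset.sum_congr rfl hstep, Finset.sum_sub_distrib, Finset.sum_add_distrib,
      Finset.sum_ite_eq' E e (fun x => w x * t),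
      Finset.sum_ite_eq' E (drev e) (fun x => w x * t), if_pos he, if_pos hrev]

lemma oplus_subset {E D : Finset (V × V)} {e : V × V} (hD : D ⊆ E) (he : e ∈ E) :
    oplus D e ⊆ E := by
  intro x hx
  rw [oplus, Finset.mem_sdiff, Finset.mem_insert] at hx
  rcases hx.1 with h | h
  · exact h ▸ he
  · exact hD h

lemma flow_oplus {E D : Finset (V × V)} {d : V → ℤ} {f : V × V → ℝ}
    (hf : IsFlow E D d f) (e : V × V) (h0 : f (drev e) = 0) :
    IsFlow E (oplus D e) d f := by
  refine ⟨hf.1, ?_, hf.2.2⟩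
  intro x hx
  by_cases hxe : x = drev e
  · exact hxe ▸ h0
  · apply hf.2.1
    intro hxD
    exact hx (by rw [oplus, Finset.mem_sdiff, Finset.mem_insert]
                 exact ⟨Or.inr hxD, by simpa using hxe⟩)

/-- If the unique min-cost flow on `D` is also a min-cost flow on `oplus D e'`,
then `A (oplus D e') = A D`. -/
lemma aeq_of_min {E : Finset (V × V)} {d : V → ℤ} {w : V × V → ℝ}
    {A : Finset (V × V) → Finset (V × V)} (hA : GoodA E d w A)
    {D : Finset (V × V)} (hD : D ⊆ E) (hDf : AdmitsFlow E D d)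
    {e' : V × V} (he' : e' ∈ E)
    (hmin : IsMinCostFlow E (oplus D e') d w (ind (A D))) :
    AEq E d A (oplus D e') D := by
  have hsub : oplus D e' ⊆ E := oplus_subset hD he'
  have hadm : AdmitsFlow E (oplus D e') d := ⟨_, hmin.1⟩
  have heq : ind (A D) = ind (A (oplus D e')) := (hA _ hsub hadm).2 _ hmin
  refine ⟨hadm, hDf, ?_⟩
  ext x
  have hx := congrFun heq x
  simp only [ind] at hx
  by_cases h1 : x ∈ A D <;> by_cases h2 : x ∈ A (oplus D e') <;>
    simp [h1, h2] at hx ⊢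

lemma min_not_both {E D : Finset (V × V)} {d : V → ℤ} {w : V × V → ℝ}
    (hw : ∀ e ∈ E, 0 < w e) {e : V × V}
    (he : e ∈ E) (hrev : drev e ∈ E) (hne : e ≠ drev e) {f : V × V → ℝ}
    (hmin : IsMinCostFlow E D d w f) : f e = 0 ∨ f (drev e) = 0 := by
  by_contra hc
  push_neg at hc
  have h1 : 0 < f e := lt_of_le_of_ne (hmin.1.1 e he).1 (Ne.symm hc.1)
  have h2 : 0 < f (drev e) := lt_of_le_of_ne (hmin.1.1 _ hrev).1 (Ne.symm hc.2)
  set t := min (f e) (f (drev e)) with ht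
  have ht0 : 0 < t := lt_min h1 h2
  have hfl := flow_cancel_s5 he hrev hne hmin.1 ht0.le (min_le_left _ _) (min_le_right _ _)
  have hcost := cost_cancel (w := w) (h := f) he hrev hne t
  have := hmin.2 _ hfl
  rw [hcost] at this
  nlinarith [hw e he, hw _ hrev]

lemma main_aux {E D : Finset (V × V)} {d : V → ℤ} {w : V × V → ℝ}
    (hw : ∀ x ∈ E, 0 < w x)
    {A : Finset (V × V) → Finset (V × V)} (hA : GoodA E d w A)
    (hD : D ⊆ E) (hDf : AdmitsFlow E D d)
    {e : V × V} (he : e ∈ E) (hrev : drev e ∈ E) (hne : e ≠ drev e)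
    (hf0 : ind (A D) (drev e) = 0) :
    AEq E d A (oplus D e) D ∨ AEq E d A (oplus D (drev e)) D := by
  obtain ⟨hfmin, -⟩ := hA D hD hDf
  set f := ind (A D) with hfdef
  have hflow1 : IsFlow E (oplus D e) d f := flow_oplus hfmin.1 e hf0
  by_cases hm : ∀ g, IsFlow E (oplus D e) d g → flowCost E w f ≤ flowCost E w g
  · exact Or.inl (aeq_of_min hA hD hDf he ⟨hflow1, hm⟩)
  push_neg at hm
  obtain ⟨g, hg, hglt⟩ := hm
  have heD : e ∉ D := by
    intro heD
    have hsub : oplus D e ⊆ D := by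
      intro x hx
      rw [oplus, Finset.mem_sdiff, Finset.mem_insert] at hx
      rcases hx.1 with h | h
      · exact h ▸ heD
      · exact h
    exact absurd (hfmin.2 g (flow_mono hg hsub)) (not_le.mpr hglt)
  have hfe : f e = 0 := hfmin.1.2.1 e heD
  have hflow2 : IsFlow E (oplus D (drev e)) d f :=
    flow_oplus hfmin.1 (drev e) (by rw [drev_drev]; exact hfe)
  by_cases hm' : ∀ g', IsFlow E (oplus D (drev e)) d g' → flowCost E w f ≤ flowCost E w g'
  · exact Or.inr (aeq_of_min hA hD hDf hrev ⟨hflow2, hm'⟩)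
  push_neg at hm'
  obtain ⟨g', hg', hg'lt⟩ := hm'
  exfalso
  have hge : 0 < g e := by
    rcases lt_or_eq_of_le (hg.1 e he).1 with h | h
    · exact h
    · exfalso
      have hgD : IsFlow E D d g := by
        refine ⟨hg.1, ?_, hg.2.2⟩
        intro x hx
        by_cases hxe : x = e
        · exact hxe ▸ h.symm
        · apply hg.2.1
          intro hmem
          rw [oplus, Finset.mem_sdiff, Finset.mem_insert] at hmem
          rcases hmem.1 with h' | h'
          · exact hxe h'
          · exact hx h'
      exact absurd (hfmin.2 g hgD) (not_le.mpr hglt)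
  have hg'r : 0 < g' (drev e) := by
    rcases lt_or_eq_of_le (hg'.1 (drev e) hrev).1 with h | h
    · exact h
    · exfalso
      have hgD : IsFlow E D d g' := by
        refine ⟨hg'.1, ?_, hg'.2.2⟩
        intro x hx
        by_cases hxe : x = drev e
        · exact hxe ▸ h.symm
        · apply hg'.2.1
          intro hmem
          rw [oplus, Finset.mem_sdiff, Finset.mem_insert] at hmem
          rcases hmem.1 with h' | h'
          · exact hxe h'
          · exact hx h'
      exact absurd (hfmin.2 g' hgD) (not_le.mpr hg'lt)
  have hg_r : g (drev e) = 0 :=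
    hg.2.1 _ (fun hmem => (Finset.mem_sdiff.mp hmem).2 (Finset.mem_singleton_self _))
  have hg'_e : g' e = 0 :=
    hg'.2.1 _ (fun hmem => (Finset.mem_sdiff.mp hmem).2 (Finset.mem_singleton_self e))
  set S := g e + g' (drev e) with hSdef
  have hS : 0 < S := by positivity
  set l := g' (drev e) / S with hldef
  have hl0 : 0 < l := div_pos hg'r hS
  have hl1 : l < 1 := (div_lt_one hS).mpr (by linarith)
  set h := fun x => l * g x + (1 - l) * g' x with hh
  have hcombo : IsFlow E (oplus D e ∪ oplus D (drev e)) d h := flow_combo hg hg' hl0.le hl1.le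
  have hsubU : oplus D e ∪ oplus D (drev e) ⊆ insert e (insert (drev e) D) := by
    intro x hx
    rcases Finset.mem_union.mp hx with h' | h' <;>
      · rw [oplus, Finset.mem_sdiff, Finset.mem_insert] at h'
        simp only [Finset.mem_insert]
        tauto
  have hcombo' : IsFlow E (insert e (insert (drev e) D)) d h := flow_mono hcombo hsubU
  have hte : h e = l * g e := by rw [hh]; dsimp only; rw [hg'_e]; ring
  have htr : h (drev e) = (1 - l) * g' (drev e) := by rw [hh]; dsimp only; rw [hg_r]; ring
  have heqt : h e = h (drev e) := by
    rw [hte, htr, hldef]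
    field_simp
    ring
  set t := h e with htdef
  have ht0 : 0 < t := by rw [hte]; positivity
  have hfl' := flow_cancel_s5 he hrev hne hcombo' ht0.le (le_of_eq htdef)
    (le_of_eq heqt)
  set h' := fun x => h x - ((if x = e then t else 0) + (if x = drev e then t else 0))
    with hh'
  have h'e : h' e = 0 := by
    rw [hh']; dsimp only; rw [if_pos rfl, if_neg hne, ← htdef]; ring
  have h'r : h' (drev e) = 0 := by
    rw [hh']; dsimp only
    rw [if_neg (fun hc => hne hc.symm), if_pos rfl, ← heqt]; ring
  have hflD : IsFlow E D d h' := by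
    refine ⟨hfl'.1, ?_, hfl'.2.2⟩
    intro x hx
    by_cases h1 : x = e
    · exact h1 ▸ h'e
    by_cases h2 : x = drev e
    · exact h2 ▸ h'r
    apply hfl'.2.1
    simp only [Finset.mem_insert]
    tauto
  have hcost' : flowCost E w h' = flowCost E w h - (w e * t + w (drev e) * t) :=
    cost_cancel he hrev hne t
  have hch : flowCost E w h = l * flowCost E w g + (1 - l) * flowCost E w g' := cost_combo
  have hle := hfmin.2 _ hflD
  have c1 : l * flowCost E w g < l * flowCost E w f := by
    exact mul_lt_mul_of_pos_left hglt hl0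
  have c2 : (1 - l) * flowCost E w g' < (1 - l) * flowCost E w f :=
    mul_lt_mul_of_pos_left hg'lt (by linarith)
  have hwe := hw e he
  have hwr := hw _ hrev
  nlinarith [hle, hcost', hch, c1, c2]

end Aux

theorem minCostFlow_oplus_or_oplus_rev
    {V : Type*} [Fintype V] [DecidableEq V]
    (E : Finset (V × V)) (hE_symm : ∀ e, e ∈ E ↔ drev e ∈ E)
    (hE_ne : ∀ e ∈ E, e.1 ≠ e.2)
    (d : V → ℤ) (hd : ∑ u : V, d u = 0)
    (w : V × V → ℝ) (hw : ∀ e ∈ E, 0 < w e)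
    (A : Finset (V × V) → Finset (V × V)) (hA : GoodA E d w A)
    (D : Finset (V × V)) (hD : D ⊆ E) (hDf : AdmitsFlow E D d)
    (e : V × V) (he : e ∈ E) :
    AEq E d A (oplus D e) D ∨ AEq E d A (oplus D (drev e)) D := by
  have hrev : drev e ∈ E := (hE_symm e).mp he
  have hne : e ≠ drev e := fun h => hE_ne e he (congrArg Prod.fst h)
  obtain ⟨hfmin, -⟩ := hA D hD hDf
  rcases min_not_both hw he hrev hne hfmin with h0 | h0
  · have hrr : drev (drev e) ∈ E := by rw [drev_drev]; exact he
    have hne' : drev e ≠ drev (drev e) := by rw [drev_drev]; exact fun hc => hne hc.symm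
    have h0' : ind (A D) (drev (drev e)) = 0 := by rw [drev_drev]; exact h0
    have := main_aux hw hA hD hDf hrev hrr hne' h0'
    rw [drev_drev] at this
    exact this.symm
  · exact main_aux hw hA hD hDf he hrev hne h0
end

section
/- Let D ⊆ E admit a d-flow and let e ∈ E with e ∈ A(D), i.e. the unique min-cost d-flow on D assigns flow 1 to e. Then A(D + e) = A(D); that is, the unique min-cost d-flow on D ∪ {e, rev e} coincides with that on D. -/
open Finset

private lemma ind_eq_ind {V : Type*} [DecidableEq V] {S T : Finset (V × V)}
    (h : ind S = ind T) : S = T := by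
  ext x
  have hx := congrFun h x
  simp only [ind] at hx
  by_cases hS : x ∈ S <;> by_cases hT : x ∈ T <;> simp_all

private lemma sum_pair_ind {V : Type*} [DecidableEq V]
    (s : Finset V) (P : Prop) [Decidable P] (b : V) (hb : P → b ∈ s) (c : ℝ) :
    ∑ v ∈ s, (if P ∧ v = b then c else 0) = if P then c else 0 := by
  by_cases hP : P
  · simp only [hP, true_and, if_true]
    rw [Finset.sum_ite_eq' s b (fun _ => c)]
    simp [hb hP]
  · simp [hP]

theorem minCostFlow_padd_of_mem
    {V : Type*} [Fintype V] [DecidableEq V]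
    (E : Finset (V × V)) (hE_symm : ∀ e, e ∈ E ↔ drev e ∈ E)
    (hE_ne : ∀ e ∈ E, e.1 ≠ e.2)
    (d : V → ℤ) (hd : ∑ u : V, d u = 0)
    (w : V × V → ℝ) (hw : ∀ e ∈ E, 0 < w e)
    (A : Finset (V × V) → Finset (V × V)) (hA : GoodA E d w A)
    (D : Finset (V × V)) (hD : D ⊆ E) (hDf : AdmitsFlow E D d)
    (e : V × V) (he : e ∈ E)
    (heA : e ∈ A D) :
    AEq E d A (padd D e) D := by
  classical
  obtain ⟨a, b⟩ := e
  have hab : a ≠ b := hE_ne (a, b) he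
  obtain ⟨hgmin, hguniq⟩ := hA D hD hDf
  set g := ind (A D) with hgdef
  have hge : g (a, b) = 1 := by simp [hgdef, ind, heA]
  have heD : (a, b) ∈ D := by
    by_contra hcon
    have h0 := hgmin.1.2.1 (a, b) hcon
    rw [hge] at h0; norm_num at h0
  have hErev : (b, a) ∈ E := (hE_symm (a, b)).1 he
  have hene : ((a, b) : V × V) ≠ (b, a) := by
    simp [Prod.ext_iff]; intro h; exact absurd h hab
  have hsub : padd D (a, b) ⊆ E := by
    intro x hx
    simp only [padd, Finset.mem_union, Finset.mem_insert, Finset.mem_singleton, drev] at hx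
    rcases hx with hx | hx | hx
    · exact hD hx
    · exact hx ▸ he
    · exact hx ▸ hErev
  have hDsub : D ⊆ padd D (a, b) := Finset.subset_union_left
  have hgflow' : IsFlow E (padd D (a, b)) d g :=
    ⟨hgmin.1.1, fun x hx => hgmin.1.2.1 x (fun hxD => hx (hDsub hxD)), hgmin.1.2.2⟩
  have hAdm' : AdmitsFlow E (padd D (a, b)) d := ⟨_, hgflow'⟩
  obtain ⟨hfmin, hfuniq⟩ := hA (padd D (a, b)) hsub hAdm'
  set f := ind (A (padd D (a, b))) with hfdef
  have hfg : flowCost E w f ≤ flowCost E w g := hfmin.2 _ hgflow'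
  have hfrev : f (b, a) = 0 := by
    by_contra hne
    have hf1 : f (b, a) = 1 := by
      simp only [hfdef, ind] at hne ⊢
      split_ifs at hne ⊢ with hmem
      · rfl
      · exact absurd rfl hne
    set χ : V × V → ℝ := fun x => if x = (a, b) then 1 else if x = (b, a) then 1 else 0
      with hχdef
    have hχab : χ (a, b) = 1 := by simp [hχdef]
    have hχba : χ (b, a) = 1 := by simp [hχdef, hene.symm]
    set h : V × V → ℝ := fun x => (f x + g x - χ x) / 2 with hhdef
    -- pointwise decomposition of χ
    have hχsplit : ∀ u v : V,
        χ (u, v) = (if u = a ∧ v = b then (1 : ℝ) else 0) +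
          (if u = b ∧ v = a then (1 : ℝ) else 0) := by
      intro u v
      simp only [hχdef, Prod.mk.injEq]
      by_cases h1 : u = a ∧ v = b
      · by_cases h2 : u = b ∧ v = a
        · exact absurd (h1.1.symm.trans h2.1) hab
        · simp only [h1.1, h1.2, if_pos (And.intro rfl rfl), if_neg h2]
          norm_num
          exact fun hc _ => hab hc
      · simp only [if_neg h1, zero_add]
    -- χ has zero divergence
    have hχdiv : ∀ u : V,
        ((Finset.univ.filter (fun v : V => (u, v) ∈ E)).sum fun v => χ (u, v)) -
          ((Finset.univ.filter (fun v : V => (v, u) ∈ E)).sum fun v => χ (v, u)) = 0 := by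
      intro u
      have hout : ((Finset.univ.filter (fun v : V => (u, v) ∈ E)).sum fun v => χ (u, v)) =
          (if u = a then (1 : ℝ) else 0) + (if u = b then (1 : ℝ) else 0) := by
        calc ((Finset.univ.filter (fun v : V => (u, v) ∈ E)).sum fun v => χ (u, v))
            = ∑ v ∈ Finset.univ.filter (fun v : V => (u, v) ∈ E),
                ((if u = a ∧ v = b then (1 : ℝ) else 0) +
                 (if u = b ∧ v = a then (1 : ℝ) else 0)) := by
              exact Finset.sum_congr rfl fun v _ => hχsplit u v
          _ = _ := by
              rw [Finset.sum_add_distrib,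
                sum_pair_ind _ (u = a) b (by rintro rfl; simp [he]),
                sum_pair_ind _ (u = b) a (by rintro rfl; simp [hErev])]
      have hin : ((Finset.univ.filter (fun v : V => (v, u) ∈ E)).sum fun v => χ (v, u)) =
          (if u = b then (1 : ℝ) else 0) + (if u = a then (1 : ℝ) else 0) := by
        calc ((Finset.univ.filter (fun v : V => (v, u) ∈ E)).sum fun v => χ (v, u))
            = ∑ v ∈ Finset.univ.filter (fun v : V => (v, u) ∈ E),
                ((if u = b ∧ v = a then (1 : ℝ) else 0) +
                 (if u = a ∧ v = b then (1 : ℝ) else 0)) := by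
              refine Finset.sum_congr rfl fun v _ => ?_
              rw [hχsplit v u]
              have h1 : (v = a ∧ u = b) ↔ (u = b ∧ v = a) := and_comm
              have h2 : (v = b ∧ u = a) ↔ (u = a ∧ v = b) := and_comm
              rw [if_congr h1 rfl rfl, if_congr h2 rfl rfl]
          _ = _ := by
              rw [Finset.sum_add_distrib,
                sum_pair_ind _ (u = b) a (by rintro rfl; simp [he]),
                sum_pair_ind _ (u = a) b (by rintro rfl; simp [hErev])]
      rw [hout, hin]; ring
    -- h is a flow on D
    have hhflow : IsFlow E D d h := by
      refine ⟨?_, ?_, ?_⟩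
      · intro x hx
        by_cases hx1 : x = (a, b)
        · subst hx1
          have := hfmin.1.1 (a, b) he
          simp only [hhdef, hχab, hge]
          constructor <;> nlinarith [this.1, this.2]
        · by_cases hx2 : x = (b, a)
          · subst hx2
            have := hgmin.1.1 (b, a) hErev
            simp only [hhdef, hχba, hf1]
            constructor <;> nlinarith [this.1, this.2]
          · have hχ0 : χ x = 0 := by simp [hχdef, hx1, hx2]
            have hfb := hfmin.1.1 x hx
            have hgb := hgmin.1.1 x hx
            simp only [hhdef, hχ0]
            constructor <;> nlinarith [hfb.1, hfb.2, hgb.1, hgb.2]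
      · intro x hx
        by_cases hx1 : x = (a, b)
        · exact absurd (hx1 ▸ heD) hx
        · by_cases hx2 : x = (b, a)
          · subst hx2
            have hg0 : g (b, a) = 0 := hgmin.1.2.1 (b, a) hx
            simp only [hhdef, hχba, hf1, hg0]; ring
          · have hf0 : f x = 0 := by
              refine hfmin.1.2.1 x ?_
              simp only [padd, Finset.mem_union, Finset.mem_insert, Finset.mem_singleton,
                drev]
              push_neg
              exact ⟨hx, hx1, hx2⟩
            have hg0 : g x = 0 := hgmin.1.2.1 x hx
            have hχ0 : χ x = 0 := by simp [hχdef, hx1, hx2]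
            simp [hhdef, hf0, hg0, hχ0]
      · intro u
        have hsplit : ∀ (s : Finset V) (F : V → V × V),
            (s.sum fun v => h (F v)) =
              ((s.sum fun v => f (F v)) + (s.sum fun v => g (F v)) -
                (s.sum fun v => χ (F v))) / 2 := by
          intro s F
          rw [eq_div_iff (by norm_num : (2:ℝ) ≠ 0), Finset.sum_mul,
            ← Finset.sum_add_distrib, ← Finset.sum_sub_distrib]
          refine Finset.sum_congr rfl fun v _ => ?_
          simp only [hhdef]; ring
        rw [hsplit _ (fun v => (u, v)), hsplit _ (fun v => (v, u))]
        have hdf := hfmin.1.2.2 u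
        have hdg := hgmin.1.2.2 u
        have hdχ := hχdiv u
        linarith
    -- cost of h
    have hcost : flowCost E w h =
        (flowCost E w f + flowCost E w g - (w (a, b) + w (b, a))) / 2 := by
      have hwsplit : ∀ x ∈ E, w x * χ x =
          (if x = (a, b) then w x else 0) + (if x = (b, a) then w x else 0) := by
        intro x _
        simp only [hχdef]
        by_cases h1 : x = (a, b)
        · simp [h1, hene]
        · by_cases h2 : x = (b, a)
          · simp only [h2, if_neg (Ne.symm hene), if_pos rfl, if_neg h1]
            simp
          · simp [h1, h2]
      have hχcost : (∑ x ∈ E, w x * χ x) = w (a, b) + w (b, a) := by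
        rw [Finset.sum_congr rfl hwsplit, Finset.sum_add_distrib,
          Finset.sum_ite_eq' E (a, b) w, Finset.sum_ite_eq' E (b, a) w]
        simp [he, hErev]
      simp only [flowCost]
      rw [eq_div_iff (by norm_num : (2:ℝ) ≠ 0), Finset.sum_mul,
        ← hχcost, ← Finset.sum_add_distrib, ← Finset.sum_sub_distrib]
      refine Finset.sum_congr rfl fun x _ => ?_
      simp only [hhdef]; ring
    have hgh : flowCost E w g ≤ flowCost E w h := hgmin.2 h hhflow
    have hwa := hw (a, b) he
    have hwb := hw (b, a) hErev
    linarith [hfg, hgh, hcost ▸ hgh]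
  -- f is a flow on D
  have hfflowD : IsFlow E D d f := by
    refine ⟨hfmin.1.1, ?_, hfmin.1.2.2⟩
    intro x hx
    by_cases hx1 : x = (a, b)
    · exact absurd (hx1 ▸ heD) hx
    · by_cases hx2 : x = (b, a)
      · exact hx2 ▸ hfrev
      · refine hfmin.1.2.1 x ?_
        simp only [padd, Finset.mem_union, Finset.mem_insert, Finset.mem_singleton, drev]
        push_neg
        exact ⟨hx, hx1, hx2⟩
  have hfminD : IsMinCostFlow E D d w f := by
    refine ⟨hfflowD, fun g' hg' => ?_⟩
    exact hfmin.2 g' ⟨hg'.1, fun x hx => hg'.2.1 x (fun hxD => hx (hDsub hxD)), hg'.2.2⟩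
  have hfeq : f = ind (A D) := hguniq f hfminD
  exact ⟨hAdm', hDf, ind_eq_ind (hfdef ▸ hfeq)⟩
end
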